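/- arXiv:1611.07260 — 3 statements merged into one kernel-verified Lean document; each statement's English description precedes it below -/
import Mathlib

section
/- Let 1/2 ≤ α < 1 and p = n^{-α}. Then a.a.s. in G(n,p), for every vertex v there exist vertices u and w such that u is adjacent to v, w is not adjacent to v (and w ≠ v), u and v have no common neighbor, and w and v have no common neighbor. -/
open Finset

namespace ERTool

variable {ι : Type*} [Fintype ι] [DecidableEq ι]

/-- Bernoulli weight of a single bit. -/
def bern (p : ℝ) (b : Bool) : ℝ := if b then p else 1 - p

/-- weight of a configuration -/
def wt (p : ℝ) (f : ι → Bool) : ℝ := ∏ i, bern p (f i)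

open Classical in
/-- probability of an event -/
noncomputable def pr (p : ℝ) (E : (ι → Bool) → Prop) : ℝ :=
  ∑ f : ι → Bool, if E f then wt p f else 0

lemma bern_nonneg {p : ℝ} (hp0 : 0 ≤ p) (hp1 : p ≤ 1) (b : Bool) : 0 ≤ bern p b := by
  cases b <;> simp [bern] <;> linarith

lemma wt_nonneg {p : ℝ} (hp0 : 0 ≤ p) (hp1 : p ≤ 1) (f : ι → Bool) : 0 ≤ wt p f :=
  Finset.prod_nonneg fun i _ => bern_nonneg hp0 hp1 _

lemma pr_nonneg {p : ℝ} (hp0 : 0 ≤ p) (hp1 : p ≤ 1) (E : (ι → Bool) → Prop) :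
    0 ≤ pr p E := by
  classical
  refine Finset.sum_nonneg fun f _ => ?_
  split
  · exact wt_nonneg hp0 hp1 f
  · exact le_rfl

lemma pr_mono {p : ℝ} (hp0 : 0 ≤ p) (hp1 : p ≤ 1) {E F : (ι → Bool) → Prop}
    (h : ∀ f, E f → F f) : pr p E ≤ pr p F := by
  classical
  refine Finset.sum_le_sum fun f _ => ?_
  by_cases hE : E f
  · simp [hE, h f hE]
  · simp only [hE, if_false]
    split
    · exact wt_nonneg hp0 hp1 f
    · exact le_rfl

/-- master product identity -/
lemma master (g : ι → Bool → ℝ) :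
    ∑ f : ι → Bool, ∏ i, g i (f i) = ∏ i, (g i true + g i false) := by
  classical
  rw [← Fintype.piFinset_univ, ← Finset.prod_univ_sum]
  congr 1; ext i
  simp [Finset.sum_ite_eq, add_comm]

lemma sum_wt {p : ℝ} : ∑ f : ι → Bool, wt p (f) = 1 := by
  rw [show (fun f : ι → Bool => wt p f) = fun f => ∏ i, bern p (f i) from rfl]
  rw [master (fun _ b => bern p b)]
  simp [bern]

lemma pr_le_one {p : ℝ} (hp0 : 0 ≤ p) (hp1 : p ≤ 1) (E : (ι → Bool) → Prop) :
    pr p E ≤ 1 := by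
  classical
  calc pr p E ≤ ∑ f : ι → Bool, wt p f := by
        refine Finset.sum_le_sum fun f _ => ?_
        split
        · exact le_rfl
        · exact wt_nonneg hp0 hp1 f
    _ = 1 := sum_wt (ι := ι) (p := p)

lemma pr_true {p : ℝ} : pr p (fun _ : ι → Bool => True) = 1 := by
  classical
  simp only [pr, if_true]
  exact sum_wt (p := p)

/-- union bound over a finite family of events -/
lemma pr_le_sum_of_exists {p : ℝ} (hp0 : 0 ≤ p) (hp1 : p ≤ 1) {κ : Type*}
    (𝒯 : Finset κ) (E : (ι → Bool) → Prop)
    (F : κ → (ι → Bool) → Prop) (h : ∀ f, E f → ∃ T ∈ 𝒯, F T f) :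
    pr p E ≤ ∑ T ∈ 𝒯, pr p (F T) := by
  classical
  have : ∑ T ∈ 𝒯, pr p (F T)
      = ∑ f : ι → Bool, ∑ T ∈ 𝒯, (if F T f then wt p f else 0) := by
    rw [Finset.sum_comm]
    refine Finset.sum_congr rfl fun T _ => ?_
    simp [pr]
  rw [this]
  refine Finset.sum_le_sum fun f _ => ?_
  by_cases hE : E f
  · obtain ⟨T, hT, hFT⟩ := h f hE
    simp only [hE, if_true]
    calc wt p f = if F T f then wt p f else 0 := by simp [hFT]
      _ ≤ ∑ T' ∈ 𝒯, if F T' f then wt p f else 0 :=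
        Finset.single_le_sum (f := fun T' => if F T' f then wt p f else 0) (fun T' _ => by
          split
          · exact wt_nonneg hp0 hp1 f
          · exact le_rfl) hT
  · simp only [hE, if_false]
    exact Finset.sum_nonneg fun T _ => by
      split
      · exact wt_nonneg hp0 hp1 f
      · exact le_rfl

/-- dependence of an event on a set of coordinates -/
def DepOn (E : (ι → Bool) → Prop) (J : Finset ι) : Prop :=
  ∀ f g, (∀ i ∈ J, f i = g i) → (E f ↔ E g)

omit [Fintype ι] [DecidableEq ι] in
lemma DepOn.mono {E : (ι → Bool) → Prop} {J K : Finset ι} (h : DepOn E J) (hJK : J ⊆ K) :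
    DepOn E K := fun f g hfg => h f g fun i hi => hfg i (hJK hi)

/-- merge of two configurations along J -/
def merge (J : Finset ι) (f g : ι → Bool) : ι → Bool := fun i => if i ∈ J then f i else g i

omit [Fintype ι] in
lemma merge_merge (J : Finset ι) (f g : ι → Bool) :
    merge J (merge J f g) (merge J g f) = f := by
  funext i; by_cases h : i ∈ J <;> simp [merge, h]

/-- independence of events depending on disjoint coordinate sets  -/
lemma indep {p : ℝ} {E F : (ι → Bool) → Prop} {J : Finset ι}
    (hE : DepOn E J) (hF : DepOn F Jᶜ) :
    pr p (fun f => E f ∧ F f) = pr p E * pr p F := by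
  classical
  have key : ∀ f g : ι → Bool, wt p (merge J f g) * wt p (merge J g f) = wt p f * wt p g := by
    intro f g
    rw [wt, wt, wt, wt, ← Finset.prod_mul_distrib, ← Finset.prod_mul_distrib]
    refine Finset.prod_congr rfl fun i _ => ?_
    by_cases h : i ∈ J <;> simp [merge, h, mul_comm]
  have hEm : ∀ f g, E (merge J f g) ↔ E f := by
    intro f g; exact hE _ _ (fun i hi => by simp [merge, hi])
  have hFm : ∀ f g, F (merge J f g) ↔ F g := by
    intro f g; exact hF _ _ (fun i hi => by simp [merge, (Finset.mem_compl.mp hi)])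
  have einv : Function.Involutive
      (fun q : (ι → Bool) × (ι → Bool) => (merge J q.1 q.2, merge J q.2 q.1)) := by
    intro q
    exact Prod.ext (merge_merge J q.1 q.2) (merge_merge J q.2 q.1)
  have main : ∑ q : (ι → Bool) × (ι → Bool), (if E q.1 ∧ F q.2 then wt p q.1 * wt p q.2 else 0)
      = ∑ q : (ι → Bool) × (ι → Bool), (if E q.1 ∧ F q.1 then wt p q.1 * wt p q.2 else 0) := by
    refine Fintype.sum_bijective _ einv.bijective _ _ fun q => ?_
    show (if E q.1 ∧ F q.2 then wt p q.1 * wt p q.2 else 0)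
        = if E (merge J q.1 q.2) ∧ F (merge J q.1 q.2) then
            wt p (merge J q.1 q.2) * wt p (merge J q.2 q.1) else 0
    rw [key q.1 q.2]
    simp only [hEm, hFm]
  have lhs : pr p E * pr p F
      = ∑ q : (ι → Bool) × (ι → Bool), (if E q.1 ∧ F q.2 then wt p q.1 * wt p q.2 else 0) := by
    rw [pr, pr, Finset.sum_mul_sum, Fintype.sum_prod_type]
    refine Fintype.sum_congr _ _ fun f => ?_
    refine Fintype.sum_congr _ _ fun g => ?_
    by_cases h1 : E f <;> by_cases h2 : F g <;> simp [h1, h2]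
  have rhs : pr p (fun f => E f ∧ F f)
      = ∑ q : (ι → Bool) × (ι → Bool), (if E q.1 ∧ F q.1 then wt p q.1 * wt p q.2 else 0) := by
    rw [Fintype.sum_prod_type]
    rw [pr]
    refine Fintype.sum_congr _ _ fun f => ?_
    by_cases h1 : E f ∧ F f
    · simp [h1, ← Finset.mul_sum, sum_wt]
    · simp [h1]
  rw [lhs, main, ← rhs]

end ERTool

namespace ERTool2
open ERTool

variable {ι : Type*} [Fintype ι] [DecidableEq ι]

/-- cylinder event -/
def cyl (J : Finset ι) (φ : ι → Bool) : (ι → Bool) → Prop := fun f => ∀ i ∈ J, f i = φ i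

lemma depOn_cyl (J : Finset ι) (φ : ι → Bool) : DepOn (cyl J φ) J := by
  intro f g hfg
  constructor <;> intro h i hi
  · rw [← hfg i hi]; exact h i hi
  · rw [hfg i hi]; exact h i hi

lemma pr_cyl {p : ℝ} (J : Finset ι) (φ : ι → Bool) :
    pr p (cyl J φ) = ∏ i ∈ J, bern p (φ i) := by
  classical
  have : ∀ f : ι → Bool, (if cyl J φ f then wt p f else 0)
      = ∏ i, (bern p (f i) * if i ∈ J then (if f i = φ i then 1 else 0) else 1) := by
    intro f
    rw [Finset.prod_mul_distrib]
    by_cases h : cyl J φ f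
    · simp only [h, if_true]
      rw [show ∏ i, (if i ∈ J then (if f i = φ i then (1:ℝ) else 0) else 1)
          = ∏ i, 1 from Finset.prod_congr rfl fun i _ => by
            by_cases hi : i ∈ J <;> simp [hi, h i]]
      simp [wt]
    · simp only [h, if_false]
      obtain ⟨i0, hi0, hne⟩ : ∃ i0 ∈ J, ¬ (f i0 = φ i0) := by
        by_contra hc
        push_neg at hc
        exact h fun i hi => hc i hi
      rw [eq_comm]
      apply mul_eq_zero_of_right
      apply Finset.prod_eq_zero (Finset.mem_univ i0)
      simp [hi0, hne]
  rw [pr, Finset.sum_congr rfl fun f _ => this f,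
    master (fun i b => bern p b * if i ∈ J then (if b = φ i then (1:ℝ) else 0) else 1)]
  have : ∀ i, (bern p true * if i ∈ J then (if true = φ i then (1:ℝ) else 0) else 1)
      + (bern p false * if i ∈ J then (if false = φ i then 1 else 0) else 1)
      = if i ∈ J then bern p (φ i) else 1 := by
    intro i
    by_cases hi : i ∈ J
    · cases hφ : φ i <;> simp [hi, hφ, bern]
    · simp [hi, bern]
  rw [Finset.prod_congr rfl fun i _ => this i, Finset.prod_ite_mem]
  simp

/-- number of present bits within A -/
def cnt (A : Finset ι) (f : ι → Bool) : ℕ := (A.filter (fun i => f i = true)).card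

lemma mgf {p z : ℝ} (A : Finset ι) :
    ∑ f : ι → Bool, wt p f * z ^ (cnt A f) = (1 - p + p * z) ^ A.card := by
  classical
  have : ∀ f : ι → Bool, wt p f * z ^ (cnt A f)
      = ∏ i, (bern p (f i) * if i ∈ A then (if f i = true then z else 1) else 1) := by
    intro f
    rw [Finset.prod_mul_distrib, wt, cnt]
    congr 1
    rw [Finset.prod_ite_mem, Finset.univ_inter, Finset.prod_ite, Finset.prod_const,
      Finset.prod_const, one_pow, mul_one]
  rw [Finset.sum_congr rfl fun f _ => this f,
    master (fun i b => bern p b * if i ∈ A then (if b = true then z else 1) else 1)]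
  have : ∀ i, (bern p true * if i ∈ A then ((if (true:Bool) = true then z else 1)) else 1)
      + (bern p false * if i ∈ A then (if (false:Bool) = true then z else 1) else 1)
      = if i ∈ A then (1 - p + p * z) else 1 := by
    intro i
    by_cases hi : i ∈ A <;> simp [hi, bern] <;> ring
  rw [Finset.prod_congr rfl fun i _ => this i, Finset.prod_ite_mem]
  simp

lemma chernoff_upper {p z x : ℝ} (hp0 : 0 ≤ p) (hp1 : p ≤ 1) (hz : 1 ≤ z) (A : Finset ι) :
    pr p (fun f => x ≤ (cnt A f : ℝ)) ≤ z ^ (-x) * (1 - p + p * z) ^ A.card := by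
  classical
  have hz0 : (0:ℝ) < z := lt_of_lt_of_le one_pos hz
  rw [pr, ← mgf (p := p) (z := z) A, Finset.mul_sum]
  refine Finset.sum_le_sum fun f _ => ?_
  rw [← mul_assoc, mul_comm (z ^ (-x)) (wt p f), mul_assoc]
  by_cases h : x ≤ (cnt A f : ℝ)
  · simp only [h, if_true]
    have h1 : (1:ℝ) ≤ z ^ (-x) * z ^ (cnt A f) := by
      rw [show (z:ℝ) ^ (cnt A f) = z ^ ((cnt A f : ℝ)) from (Real.rpow_natCast z _).symm,
        ← Real.rpow_add hz0]
      rw [show (1:ℝ) = z ^ (0:ℝ) from (Real.rpow_zero z).symm]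
      exact Real.rpow_le_rpow_of_exponent_le hz (by linarith)
    nlinarith [wt_nonneg hp0 hp1 f, mul_le_mul_of_nonneg_left h1 (wt_nonneg hp0 hp1 f)]
  · simp only [h, if_false]
    have : 0 ≤ z ^ (-x) * z ^ (cnt A f) := by positivity
    nlinarith [wt_nonneg hp0 hp1 f]

lemma chernoff_lower {p z x : ℝ} (hp0 : 0 ≤ p) (hp1 : p ≤ 1) (hz0 : 0 < z) (hz : z ≤ 1)
    (A : Finset ι) :
    pr p (fun f => (cnt A f : ℝ) ≤ x) ≤ z ^ (-x) * (1 - p + p * z) ^ A.card := by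
  classical
  rw [pr, ← mgf (p := p) (z := z) A, Finset.mul_sum]
  refine Finset.sum_le_sum fun f _ => ?_
  rw [← mul_assoc, mul_comm (z ^ (-x)) (wt p f), mul_assoc]
  by_cases h : (cnt A f : ℝ) ≤ x
  · simp only [h, if_true]
    have h1 : (1:ℝ) ≤ z ^ (-x) * z ^ (cnt A f) := by
      rw [show (z:ℝ) ^ (cnt A f) = z ^ ((cnt A f : ℝ)) from (Real.rpow_natCast z _).symm,
        ← Real.rpow_add hz0]
      rw [show (1:ℝ) = z ^ (0:ℝ) from (Real.rpow_zero z).symm]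
      exact Real.rpow_le_rpow_of_exponent_ge hz0 hz (by linarith)
    nlinarith [wt_nonneg hp0 hp1 f, mul_le_mul_of_nonneg_left h1 (wt_nonneg hp0 hp1 f)]
  · simp only [h, if_false]
    have : 0 ≤ z ^ (-x) * z ^ (cnt A f) := by positivity
    nlinarith [wt_nonneg hp0 hp1 f]

end ERTool2

namespace ERGraph
open ERTool ERTool2

variable {n : ℕ}

/-- possible edge slots -/
abbrev Slot (n : ℕ) := {e : Sym2 (Fin n) // ¬ e.IsDiag}

def mkS (a b : Fin n) (h : a ≠ b) : Slot n := ⟨s(a,b), by simp [Sym2.isDiag_iff_proj_eq, h]⟩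

lemma mkS_comm (a b : Fin n) (h : a ≠ b) : mkS a b h = mkS b a h.symm := by
  apply Subtype.ext
  exact Sym2.eq_swap

lemma mem_mkS (x a b : Fin n) (h : a ≠ b) : x ∈ (mkS a b h).1 ↔ (x = a ∨ x = b) :=
  Sym2.mem_iff

noncomputable def adjB (f : Slot n → Bool) (a b : Fin n) : Bool :=
  if h : a ≠ b then f (mkS a b h) else false

lemma adjB_of_ne (f : Slot n → Bool) {a b : Fin n} (h : a ≠ b) :
    adjB f a b = f (mkS a b h) := dif_pos h

lemma adjB_comm (f : Slot n → Bool) (a b : Fin n) : adjB f a b = adjB f b a := by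
  by_cases h : a = b
  · subst h; rfl
  · rw [adjB_of_ne f h, adjB_of_ne f (Ne.symm h), mkS_comm]

lemma adjB_self (f : Slot n → Bool) (a : Fin n) : adjB f a a = false := dif_neg (by simp)

lemma ne_of_adjB {f : Slot n → Bool} {a b : Fin n} (h : adjB f a b = true) : a ≠ b := by
  intro hab
  subst hab
  rw [adjB_self] at h
  exact Bool.false_ne_true h

/-- the graph associated to a configuration of slots -/
noncomputable def graphOf (f : Slot n → Bool) : SimpleGraph (Fin n) where
  Adj a b := adjB f a b = true
  symm := by constructor; intro a b hab; rwa [adjB_comm]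
  loopless := by constructor; intro a hab; rw [adjB_self] at hab; exact Bool.false_ne_true hab

open Classical in
noncomputable def toConf (G : SimpleGraph (Fin n)) : Slot n → Bool :=
  fun s => decide (s.1 ∈ G.edgeSet)

open Classical in
lemma toConf_graphOf (f : Slot n → Bool) : toConf (graphOf f) = f := by
  funext s
  obtain ⟨e, he⟩ := s
  induction e with
  | _ a b =>
    have hab : a ≠ b := by rwa [Sym2.isDiag_iff_proj_eq] at he
    show decide (s(a,b) ∈ (graphOf f).edgeSet) = _
    calc decide (s(a,b) ∈ (graphOf f).edgeSet) = decide (adjB f a b = true) :=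
          decide_eq_decide.mpr (SimpleGraph.mem_edgeSet (graphOf f))
      _ = adjB f a b := by simp
      _ = f ⟨s(a,b), he⟩ := by rw [adjB_of_ne f hab]; rfl

open Classical in
lemma graphOf_toConf (G : SimpleGraph (Fin n)) : graphOf (toConf G) = G := by
  ext a b
  show adjB (toConf G) a b = true ↔ _
  constructor
  · intro h
    have hab := ne_of_adjB h
    rw [adjB_of_ne _ hab] at h
    simp only [toConf, mkS, decide_eq_true_eq, SimpleGraph.mem_edgeSet] at h
    exact h
  · intro h
    have hab := G.ne_of_adj h
    rw [adjB_of_ne _ hab]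
    simp [toConf, mkS, SimpleGraph.mem_edgeSet, h]

open Classical in
lemma card_edgeSet_eq (G : SimpleGraph (Fin n)) :
    Nat.card G.edgeSet = (Finset.univ.filter (fun s : Slot n => s.1 ∈ G.edgeSet)).card := by
  classical
  have e : {s : Slot n // s.1 ∈ G.edgeSet} ≃ G.edgeSet :=
    { toFun := fun x => ⟨x.1.1, x.2⟩
      invFun := fun e => ⟨⟨e.1, G.not_isDiag_of_mem_edgeSet e.2⟩, e.2⟩
      left_inv := fun x => rfl
      right_inv := fun e => rfl }
  rw [← Nat.card_congr e, Nat.card_eq_fintype_card, Fintype.card_subtype]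

lemma card_slot : Fintype.card (Slot n) = n.choose 2 := by
  rw [Sym2.card_subtype_not_diag, Fintype.card_fin]

open Classical in
lemma wt_toConf {p : ℝ} (G : SimpleGraph (Fin n)) :
    wt p (toConf G) =
      p ^ (Nat.card G.edgeSet) * (1 - p) ^ (n.choose 2 - Nat.card G.edgeSet) := by
  classical
  have : ∀ s : Slot n, bern p (toConf G s) = if s.1 ∈ G.edgeSet then p else 1 - p := by
    intro s
    by_cases h : s.1 ∈ G.edgeSet <;> simp [toConf, bern, h]
  rw [wt, Finset.prod_congr rfl fun s _ => this s, Finset.prod_ite, Finset.prod_const,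
    Finset.prod_const, card_edgeSet_eq]
  congr 2
  have h2 := Finset.card_filter_add_card_filter_not
    (s := (Finset.univ : Finset (Slot n))) (p := fun s : Slot n => s.1 ∈ G.edgeSet)
  rw [Finset.card_univ, card_slot] at h2
  omega

open Classical in
/-- THE BRIDGE: `graphProb` is `pr` of the corresponding event. -/
lemma graphProb_eq (p : ℝ) (A : SimpleGraph (Fin n) → Prop) :
    (∑ G : SimpleGraph (Fin n),
      if A G then p ^ (Nat.card G.edgeSet) * (1 - p) ^ (n.choose 2 - Nat.card G.edgeSet) else 0)
    = pr p (fun f : Slot n → Bool => A (graphOf f)) := by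
  classical
  rw [pr]
  refine Fintype.sum_equiv ⟨toConf, graphOf, graphOf_toConf, toConf_graphOf⟩ _ _ fun G => ?_
  show (if A G then p ^ (Nat.card G.edgeSet) * (1 - p) ^ (n.choose 2 - Nat.card G.edgeSet) else 0)
    = (if A (graphOf (toConf G)) then wt p (toConf G) else 0)
  rw [graphOf_toConf G]
  by_cases hA : A G
  · simp only [hA, if_true]
    exact (wt_toConf G).symm
  · simp [hA]

end ERGraph

namespace ERCover
open ERTool ERTool2 ERGraph Finset

variable {n : ℕ}

/-- slots joining `j` to members of `C` (assuming `j ∉ C`) -/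
noncomputable def Jset (j : Fin n) (C : Finset (Fin n)) (hj : j ∉ C) : Finset (Slot n) :=
  C.attach.image (fun c => mkS c.1 j (ne_of_mem_of_not_mem c.2 hj))

lemma mem_Jset {j : Fin n} {C : Finset (Fin n)} {hj : j ∉ C} {s : Slot n} :
    s ∈ Jset j C hj ↔ ∃ c : {x // x ∈ C}, s = mkS c.1 j (ne_of_mem_of_not_mem c.2 hj) := by
  simp [Jset, eq_comm]

lemma mem_of_mem_Jset {j : Fin n} {C : Finset (Fin n)} {hj : j ∉ C} {s : Slot n}
    (hs : s ∈ Jset j C hj) : j ∈ s.1 := by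
  obtain ⟨c, rfl⟩ := mem_Jset.mp hs
  simp [mkS]

lemma not_mem_Jset {j a b : Fin n} {C : Finset (Fin n)} {hj : j ∉ C} (h : a ≠ b)
    (ha : a ≠ j) (hb : b ≠ j) : mkS a b h ∉ Jset j C hj := by
  intro hs
  have := mem_of_mem_Jset hs
  rw [mem_mkS] at this
  rcases this with h1 | h1
  · exact ha h1.symm
  · exact hb h1.symm

lemma card_Jset {j : Fin n} {C : Finset (Fin n)} (hj : j ∉ C) :
    (Jset j C hj).card = C.card := by
  rw [Jset, Finset.card_image_of_injective _ ?_, Finset.card_attach]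
  intro c c' hcc
  have h2 := Subtype.ext_iff.mp hcc
  simp only [mkS, Sym2.eq_iff] at h2
  rcases h2 with ⟨h3, _⟩ | ⟨h3, h4⟩
  · exact Subtype.ext h3
  · exact absurd h3 (ne_of_mem_of_not_mem c.2 hj)

/-- pattern : present iff slot meets T -/
noncomputable def patt (T : Finset (Fin n)) : Slot n → Bool :=
  fun s => decide (∃ x ∈ T, x ∈ s.1)

lemma patt_mkS {T : Finset (Fin n)} {a j : Fin n} (h : a ≠ j) (hjT : j ∉ T) :
    patt T (mkS a j h) = decide (a ∈ T) := by
  rw [patt, decide_eq_decide]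
  constructor
  · rintro ⟨x, hxT, hx⟩
    rw [mem_mkS] at hx
    rcases hx with rfl | rfl
    · exact hxT
    · exact absurd hxT hjT
  · intro ha
    exact ⟨a, ha, by rw [mem_mkS]; exact Or.inl rfl⟩

lemma adjB_of_cyl {j : Fin n} {C T : Finset (Fin n)} {hj : j ∉ C} {f : Slot n → Bool}
    (hf : cyl (Jset j C hj) (patt T) f) (hT : T ⊆ C) {c : Fin n} (hc : c ∈ C) :
    (adjB f c j = true) ↔ c ∈ T := by
  have hcj : c ≠ j := ne_of_mem_of_not_mem hc hj
  have hmem : mkS c j hcj ∈ Jset j C hj := by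
    rw [mem_Jset]; exact ⟨⟨c, hc⟩, rfl⟩
  rw [adjB_of_ne f hcj, hf _ hmem, patt_mkS hcj (fun hjT => hj (hT hjT))]
  simp

lemma pr_cyl_patt {p : ℝ} {j : Fin n} {C T : Finset (Fin n)} (hj : j ∉ C) (hT : T ⊆ C) :
    pr p (cyl (Jset j C hj) (patt T)) = p ^ T.card * (1 - p) ^ (C.card - T.card) := by
  classical
  rw [pr_cyl]
  rw [Jset, Finset.prod_image ?inj]
  case inj =>
    intro c _ c' _ hcc
    have h2 := Subtype.ext_iff.mp hcc
    simp only [mkS, Sym2.eq_iff] at h2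
    rcases h2 with ⟨h3, _⟩ | ⟨h3, h4⟩
    · exact Subtype.ext h3
    · exact absurd h3 (ne_of_mem_of_not_mem c.2 hj)
  have : ∀ c : {x // x ∈ C}, bern p (patt T (mkS c.1 j (ne_of_mem_of_not_mem c.2 hj)))
      = if c.1 ∈ T then p else 1 - p := by
    intro c
    rw [patt_mkS _ (fun hjT => hj (hT hjT))]
    by_cases h : c.1 ∈ T <;> simp [h, bern]
  rw [Finset.prod_congr rfl fun c _ => this c]
  rw [Finset.prod_ite, Finset.prod_const, Finset.prod_const]
  have e1 : (Finset.filter (fun c : {x // x ∈ C} => c.1 ∈ T) C.attach).card = T.card := by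
    apply Finset.card_bij (fun c _ => c.1)
    · intro a ha; exact (Finset.mem_filter.mp ha).2
    · intro a ha a' ha' h; exact Subtype.ext h
    · intro t ht; exact ⟨⟨t, hT ht⟩, Finset.mem_filter.mpr ⟨Finset.mem_attach _ _, ht⟩, rfl⟩
  have e2 : (Finset.filter (fun c : {x // x ∈ C} => ¬ c.1 ∈ T) C.attach).card
      = C.card - T.card := by
    have := Finset.card_filter_add_card_filter_not
      (s := C.attach) (p := fun c : {x // x ∈ C} => c.1 ∈ T)
    rw [Finset.card_attach] at this
    omega
  rw [e1, e2]

/-- the subset-binomial identity -/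
lemma sum_powerset_pow (a b : ℝ) (C : Finset (Fin n)) :
    ∑ T ∈ C.powerset, a ^ T.card * b ^ (C.card - T.card) = (a + b) ^ C.card := by
  classical
  rw [← Finset.prod_const, Finset.prod_add]
  refine Finset.sum_congr rfl fun T hT => ?_
  rw [Finset.prod_const, Finset.prod_const, Finset.card_sdiff_of_subset (Finset.mem_powerset.mp hT)]

end ERCover

namespace ERCover
open ERTool ERTool2 ERGraph Finset

variable {n : ℕ}

lemma not_mem_Jset' {j i : Fin n} {C : Finset (Fin n)} {hj : j ∉ C} (h : j ≠ i)
    (hi : i ∉ C) : mkS j i h ∉ Jset j C hj := by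
  intro hs
  obtain ⟨c, hc⟩ := mem_Jset.mp hs
  have h2 := Subtype.ext_iff.mp hc
  simp only [mkS, Sym2.eq_iff] at h2
  rcases h2 with ⟨h3, h4⟩ | ⟨h3, h4⟩
  · exact h h4.symm
  · exact hi (h4 ▸ c.2)

theorem cover {p r : ℝ} (hp0 : 0 ≤ p) (hp1 : p ≤ 1) (hr0 : 0 < r) (hr1 : r ≤ 1) :
    ∀ (k : ℕ) (W : Finset (Fin n)) (C : Fin n → Finset (Fin n)),
      W.card ≤ k → (∀ i, i ∉ C i) →
      (∀ i, (1 - p + p/r) ^ (C i).card - (1-p) ^ (C i).card ≤ r) →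
      pr p (fun f => ∀ i ∈ W, ∃ x ∈ C i, adjB f x i = true) ≤ r ^ W.card := by
  classical
  have hA1 : (1:ℝ) ≤ 1 - p + p/r := by
    have : p ≤ p / r := by
      rw [le_div_iff₀ hr0]
      nlinarith
    linarith
  intro k
  induction k with
  | zero =>
    intro W C hWk hC hnum
    have hW : W = ∅ := Finset.card_eq_zero.mp (Nat.le_zero.mp hWk)
    subst hW
    simpa using pr_le_one hp0 hp1 _
  | succ k ih =>
    intro W C hWk hC hnum
    by_cases hW : W = ∅
    · subst hW
      simpa using pr_le_one hp0 hp1 _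
    obtain ⟨j, hjW⟩ := Finset.nonempty_iff_ne_empty.mpr hW
    set Cj := C j with hCj
    have hjC : j ∉ Cj := hC j
    set 𝒯 := Cj.powerset.filter (fun T => T.Nonempty) with h𝒯
    -- the new exclusion sets
    set C' : Fin n → Finset (Fin n) :=
      (fun i => if i ∈ Cj then (C i).erase j else C i) with hC'def
    have hC'sub : ∀ i, C' i ⊆ C i := by
      intro i
      rw [hC'def]
      by_cases hi : i ∈ Cj <;> simp [hi, Finset.erase_subset]
    have hC'mem : ∀ i, i ∉ C' i := fun i h => hC i (hC'sub i h)
    have hnum' : ∀ i, (1 - p + p/r) ^ (C' i).card - (1-p) ^ (C' i).card ≤ r := by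
      intro i
      have hcc : (C' i).card ≤ (C i).card := Finset.card_le_card (hC'sub i)
      have h1 : (1 - p + p/r) ^ (C' i).card ≤ (1 - p + p/r) ^ (C i).card :=
        pow_le_pow_right₀ hA1 hcc
      have h2 : (1-p) ^ (C i).card ≤ (1-p) ^ (C' i).card :=
        pow_le_pow_of_le_one (by linarith) (by linarith) hcc
      have := hnum i
      linarith
    -- decomposition
    have hdec : ∀ f : Slot n → Bool, (∀ i ∈ W, ∃ x ∈ C i, adjB f x i = true) →
        ∃ T ∈ 𝒯, (cyl (Jset j Cj hjC) (patt T) f ∧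
          (∀ i ∈ W \ insert j T, ∃ x ∈ C' i, adjB f x i = true)) := by
      intro f hf
      set T := Cj.filter (fun c => adjB f c j = true) with hTdef
      have hTsub : T ⊆ Cj := Finset.filter_subset _ _
      refine ⟨T, ?_, ?_, ?_⟩
      · rw [h𝒯, Finset.mem_filter, Finset.mem_powerset]
        refine ⟨hTsub, ?_⟩
        obtain ⟨x, hxC, hx⟩ := hf j hjW
        exact ⟨x, by rw [hTdef, Finset.mem_filter]; exact ⟨hxC, hx⟩⟩
      · -- cylinder
        intro s hs
        obtain ⟨c, rfl⟩ := mem_Jset.mp hs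
        rw [patt_mkS _ (fun hjT => hjC (hTsub hjT))]
        rw [← adjB_of_ne f (ne_of_mem_of_not_mem c.2 hjC)]
        have : (adjB f c.1 j = true) ↔ c.1 ∈ T := by
          rw [hTdef, Finset.mem_filter]
          exact ⟨fun h => ⟨c.2, h⟩, fun h => h.2⟩
        cases hb : adjB f c.1 j
        · have hcT : c.1 ∉ T := fun hc => by simpa [hb] using this.mpr hc
          simp [hcT]
        · have hcT : c.1 ∈ T := this.mp hb
          simp [hcT]
      · -- residual event
        intro i hi
        rw [Finset.mem_sdiff, Finset.mem_insert] at hi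
        obtain ⟨hiW, hins⟩ := hi
        push_neg at hins
        obtain ⟨hij, hiT⟩ := hins
        obtain ⟨x, hxC, hx⟩ := hf i hiW
        refine ⟨x, ?_, hx⟩
        rw [hC'def]
        by_cases hicj : i ∈ Cj
        · simp only [hicj, if_true, Finset.mem_erase]
          refine ⟨?_, hxC⟩
          intro hxj
          subst hxj
          apply hiT
          rw [hTdef, Finset.mem_filter]
          refine ⟨hicj, ?_⟩
          rwa [adjB_comm]
        · simp only [hicj, if_false]
          exact hxC
    have step1 := pr_le_sum_of_exists (p := p) hp0 hp1 𝒯 _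
      (fun T f => (cyl (Jset j Cj hjC) (patt T) f ∧
          (∀ i ∈ W \ insert j T, ∃ x ∈ C' i, adjB f x i = true))) hdec
    refine le_trans step1 ?_
    -- bound each summand
    have hterm : ∀ T ∈ 𝒯,
        pr p (fun f => (cyl (Jset j Cj hjC) (patt T) f ∧
          (∀ i ∈ W \ insert j T, ∃ x ∈ C' i, adjB f x i = true)))
        ≤ ((p/r) ^ T.card * (1-p) ^ (Cj.card - T.card)) * r ^ (W.card - 1) := by
      intro T hT
      rw [h𝒯, Finset.mem_filter, Finset.mem_powerset] at hT
      obtain ⟨hTsub, hTne⟩ := hT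
      -- independence
      have hdep1 : DepOn (cyl (Jset j Cj hjC) (patt T)) (Jset j Cj hjC) := depOn_cyl _ _
      have hdep2 : DepOn (fun f => ∀ i ∈ W \ insert j T, ∃ x ∈ C' i, adjB f x i = true)
          (Jset j Cj hjC)ᶜ := by
        intro f g hfg
        have hadj : ∀ x i : Fin n, i ≠ j → x ∈ C' i → adjB f x i = adjB g x i := by
          intro x i hij hxC
          by_cases hxi : x = i
          · subst hxi; rw [adjB_self, adjB_self]
          · rw [adjB_of_ne f hxi, adjB_of_ne g hxi]
            apply hfg
            rw [Finset.mem_compl]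
            by_cases hxj : x = j
            · subst hxj
              apply not_mem_Jset' hxi
              intro hicj
              rw [hC'def] at hxC
              simp only [hicj, if_true, Finset.mem_erase] at hxC
              exact hxC.1 rfl
            · exact not_mem_Jset hxi hxj hij
        constructor <;> intro h i hi
        · obtain ⟨x, hx1, hx2⟩ := h i hi
          have hij : i ≠ j := by
            rw [Finset.mem_sdiff, Finset.mem_insert] at hi
            exact fun he => hi.2 (Or.inl he)
          exact ⟨x, hx1, by rw [← hadj x i hij hx1]; exact hx2⟩
        · obtain ⟨x, hx1, hx2⟩ := h i hi
          have hij : i ≠ j := by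
            rw [Finset.mem_sdiff, Finset.mem_insert] at hi
            exact fun he => hi.2 (Or.inl he)
          exact ⟨x, hx1, by rw [hadj x i hij hx1]; exact hx2⟩
      rw [indep hdep1 hdep2, pr_cyl_patt hjC hTsub]
      -- apply induction hypothesis
      set W' := W \ insert j T with hW'
      have hW'card : W'.card + T.card + 1 ≥ W.card := by
        have h1 : W.card - (insert j T).card ≤ W'.card := Finset.le_card_sdiff _ _
        have h2 : (insert j T).card ≤ T.card + 1 := Finset.card_insert_le _ _
        omega
      have hW'lt : W'.card < W.card := by
        apply Finset.card_lt_card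
        constructor
        · exact Finset.sdiff_subset
        · intro hsub
          have := hsub hjW
          rw [hW', Finset.mem_sdiff] at this
          exact this.2 (Finset.mem_insert_self j T)
      have hIH := ih W' C' (by omega) hC'mem hnum'
      have hprW' : pr p (fun f => ∀ i ∈ W', ∃ x ∈ C' i, adjB f x i = true) ≤ r ^ W'.card :=
        hIH
      have hrpow : r ^ W'.card ≤ r ^ (W.card - 1) * (1/r) ^ T.card := by
        have h := pow_le_pow_of_le_one hr0.le hr1
          (show W.card - 1 ≤ W'.card + T.card by omega)
        calc r ^ W'.card = r ^ (W'.card + T.card) * (1/r) ^ T.card := by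
              rw [pow_add, div_pow, one_pow]
              field_simp
          _ ≤ r ^ (W.card - 1) * (1/r) ^ T.card :=
              mul_le_mul_of_nonneg_right h (by positivity)
      have hcylpos : (0:ℝ) ≤ p ^ T.card * (1 - p) ^ (Cj.card - T.card) :=
        mul_nonneg (pow_nonneg hp0 _) (pow_nonneg (by linarith) _)
      calc p ^ T.card * (1 - p) ^ (Cj.card - T.card)
            * pr p (fun f => ∀ i ∈ W', ∃ x ∈ C' i, adjB f x i = true)
          ≤ p ^ T.card * (1 - p) ^ (Cj.card - T.card) * (r ^ (W.card - 1) * (1/r) ^ T.card) :=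
            mul_le_mul_of_nonneg_left (le_trans hprW' hrpow) hcylpos
        _ = ((p/r) ^ T.card * (1-p) ^ (Cj.card - T.card)) * r ^ (W.card - 1) := by
            rw [div_pow, div_pow, one_pow]
            field_simp
            try ring
    refine le_trans (Finset.sum_le_sum hterm) ?_
    rw [← Finset.sum_mul]
    -- binomial sum
    have hsum : ∑ T ∈ 𝒯, (p/r) ^ T.card * (1-p) ^ (Cj.card - T.card)
        = (1 - p + p/r) ^ Cj.card - (1-p) ^ Cj.card := by
      have hsplit : ∑ T ∈ Cj.powerset, (p/r) ^ T.card * (1-p) ^ (Cj.card - T.card)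
          = (∑ T ∈ 𝒯, (p/r) ^ T.card * (1-p) ^ (Cj.card - T.card))
            + ((p/r) ^ (∅ : Finset (Fin n)).card * (1-p) ^ (Cj.card - (∅ : Finset (Fin n)).card)) := by
        rw [h𝒯]
        rw [← Finset.sum_filter_add_sum_filter_not Cj.powerset (fun T => T.Nonempty)]
        congr 1
        have : Cj.powerset.filter (fun T => ¬ T.Nonempty) = {∅} := by
          ext T
          simp only [Finset.mem_filter, Finset.mem_powerset,
            Finset.not_nonempty_iff_eq_empty, Finset.mem_singleton]
          constructor
          · rintro ⟨_, h⟩; exact h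
          · rintro rfl; exact ⟨Finset.empty_subset _, rfl⟩
        rw [this, Finset.sum_singleton]
      have hful := sum_powerset_pow (p/r) (1-p) Cj
      rw [show (p/r) + (1-p) = 1 - p + p/r by ring] at hful
      simp only [Finset.card_empty, pow_zero, Nat.sub_zero, one_mul] at hsplit
      rw [hful] at hsplit
      linarith
    rw [hsum]
    have hWpos : 1 ≤ W.card := Finset.card_pos.mpr ⟨j, hjW⟩
    calc ((1 - p + p/r) ^ Cj.card - (1-p) ^ Cj.card) * r ^ (W.card - 1)
        ≤ r * r ^ (W.card - 1) := by
          apply mul_le_mul_of_nonneg_right (hnum j) (by positivity)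
      _ = r ^ W.card := by
          rw [← pow_succ']
          congr 1
          omega

end ERCover

namespace ERNum

lemma exp_le_inv_one_sub {x : ℝ} (h0 : 0 ≤ x) (h1 : x < 1) : Real.exp x ≤ 1 / (1 - x) := by
  have h2 : 1 - x ≤ Real.exp (-x) := by
    have := Real.add_one_le_exp (-x)
    linarith
  rw [le_div_iff₀ (by linarith)]
  calc Real.exp x * (1 - x) ≤ Real.exp x * Real.exp (-x) := by
        apply mul_le_mul_of_nonneg_left h2 (Real.exp_nonneg x)
    _ = 1 := by rw [← Real.exp_add]; simp

lemma one_sub_ge_exp' {x : ℝ} (h0 : 0 ≤ x) (h1 : x < 1) :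
    Real.exp (-(x / (1 - x))) ≤ 1 - x := by
  have hx1 : 0 < 1 - x := by linarith
  have h2 : 1 + x / (1 - x) ≤ Real.exp (x / (1 - x)) := by
    have := Real.add_one_le_exp (x / (1 - x)); linarith
  have h3 : 1 + x / (1 - x) = 1 / (1 - x) := by field_simp; ring
  rw [Real.exp_neg, inv_le_comm₀ (Real.exp_pos _) hx1]
  rw [h3] at h2
  calc (1 - x)⁻¹ = 1 / (1 - x) := (one_div _).symm
    _ ≤ Real.exp (x / (1 - x)) := h2

lemma exp_four_le : Real.exp 4 ≤ 55 := by
  have h := Real.exp_one_lt_d9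
  calc Real.exp 4 = (Real.exp 1) ^ (4:ℕ) := by
        rw [← Real.exp_nat_mul]; norm_num
    _ ≤ 2.7182818286 ^ (4:ℕ) := by
        apply pow_le_pow_left₀ (Real.exp_nonneg 1) (le_of_lt h)
    _ ≤ 55 := by norm_num

/-- The core numerical inequality for the cover lemma. -/
lemma numcore {p : ℝ} (hp0 : 0 ≤ p) (hp5 : p ≤ 1/5) (m : ℕ) (hm : (m:ℝ) * p ≤ 16/5) :
    (1 - p + p/((499:ℝ)/500)) ^ m - (1-p) ^ m ≤ (499:ℝ)/500 := by
  have hmp0 : 0 ≤ (m:ℝ) * p := by positivity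
  have hA : (1:ℝ) - p + p/((499:ℝ)/500) = 1 + p * (1/499) := by ring
  rw [hA]
  have hup : (1 + p * (1/499)) ^ m ≤ Real.exp ((m:ℝ) * (p * (1/499))) := by
    calc (1 + p * (1/499)) ^ m ≤ (Real.exp (p * (1/499))) ^ m := by
          apply pow_le_pow_left₀ (by positivity) (by
            have := Real.add_one_le_exp (p * (1/499)); linarith)
      _ = Real.exp ((m:ℝ) * (p * (1/499))) := by rw [← Real.exp_nat_mul]
  have hup2 : Real.exp ((m:ℝ) * (p * (1/499))) ≤ Real.exp ((16:ℝ)/2495) := by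
    apply Real.exp_le_exp.mpr
    have h : (m:ℝ) * (p * (1/499)) = ((m:ℝ) * p) * (1/499) := by ring
    rw [h]
    calc ((m:ℝ) * p) * (1/499) ≤ (16/5) * (1/499) := by
          apply mul_le_mul_of_nonneg_right hm (by norm_num)
      _ = (16:ℝ)/2495 := by norm_num
  have hup3 : Real.exp ((16:ℝ)/2495) ≤ 1/(1 - 16/2495) :=
    exp_le_inv_one_sub (by norm_num) (by norm_num)
  have hdn : (Real.exp (-(p / (1-p)))) ^ m ≤ (1-p) ^ m := by
    apply pow_le_pow_left₀ (Real.exp_nonneg _)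
    exact one_sub_ge_exp' hp0 (by linarith)
  have hdn1 : Real.exp (-(4:ℝ)) ≤ (Real.exp (-(p / (1-p)))) ^ m := by
    rw [← Real.exp_nat_mul]
    apply Real.exp_le_exp.mpr
    have hp1 : (4:ℝ)/5 ≤ 1 - p := by linarith
    have hmain : (m:ℝ) * (p / (1-p)) ≤ 4 := by
      rw [mul_div_assoc']
      rw [div_le_iff₀ (by linarith)]
      nlinarith
    have : (m:ℝ) * -(p / (1-p)) = -((m:ℝ) * (p / (1-p))) := by ring
    rw [this]
    linarith
  have hdn2 : (1:ℝ)/55 ≤ Real.exp (-(4:ℝ)) := by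
    rw [Real.exp_neg, one_div]
    exact inv_anti₀ (Real.exp_pos _) exp_four_le
  have hfinal : (1:ℝ)/(1 - 16/2495) - 1/55 ≤ (499:ℝ)/500 := by norm_num
  have h1 : (1 + p * (1/499)) ^ m ≤ 1/(1 - 16/2495) := le_trans hup (le_trans hup2 hup3)
  have h2 : (1:ℝ)/55 ≤ (1-p) ^ m := le_trans hdn2 (le_trans hdn1 hdn)
  linarith

end ERNum

namespace ERTool
variable {ι : Type*} [Fintype ι] [DecidableEq ι]

lemma pr_or_le {p : ℝ} (hp0 : 0 ≤ p) (hp1 : p ≤ 1) (E F : (ι → Bool) → Prop) :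
    pr p (fun f => E f ∨ F f) ≤ pr p E + pr p F := by
  classical
  rw [pr, pr, pr, ← Finset.sum_add_distrib]
  refine Finset.sum_le_sum fun f _ => ?_
  have hw := wt_nonneg (ι := ι) hp0 hp1 f
  by_cases hE : E f <;> by_cases hF : F f <;> simp [hE, hF] <;> linarith

end ERTool

namespace ERMain
open ERTool ERTool2 ERGraph ERCover ERNum Finset

variable {n : ℕ}

noncomputable def Row (v : Fin n) : Finset (Slot n) :=
  Jset v (Finset.univ.erase v) (Finset.notMem_erase v Finset.univ)

lemma mem_nbr {f : Slot n → Bool} {v u : Fin n} :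
    u ∈ Finset.univ.filter (fun u => adjB f v u = true) ↔ adjB f v u = true := by
  simp

lemma card_row (v : Fin n) : (Row v).card = n - 1 := by
  rw [Row, card_Jset, Finset.card_erase_of_mem (Finset.mem_univ v), Finset.card_univ,
    Fintype.card_fin]

lemma cnt_row {f : Slot n → Bool} {v : Fin n} :
    cnt (Row v) f = (Finset.univ.filter (fun u => adjB f v u = true)).card := by
  classical
  rw [cnt]
  symm
  apply Finset.card_bij (fun u hu => mkS v u (ne_of_adjB (mem_nbr.mp hu)))
  · intro u hu
    rw [Finset.mem_filter]
    constructor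
    · rw [Row, mkS_comm, mem_Jset]
      exact ⟨⟨u, Finset.mem_erase.mpr ⟨(ne_of_adjB (mem_nbr.mp hu)).symm, Finset.mem_univ u⟩⟩,
        rfl⟩
    · rw [← adjB_of_ne f (ne_of_adjB (mem_nbr.mp hu))]
      exact mem_nbr.mp hu
  · intro u hu u' hu' h
    have h2 := Subtype.ext_iff.mp h
    simp only [mkS, Sym2.eq_iff] at h2
    rcases h2 with ⟨_, h3⟩ | ⟨h3, h4⟩
    · exact h3
    · exact absurd h3 (ne_of_adjB (mem_nbr.mp hu'))
  · intro s hs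
    rw [Finset.mem_filter] at hs
    obtain ⟨hs1, hs2⟩ := hs
    rw [Row] at hs1
    obtain ⟨c, rfl⟩ := mem_Jset.mp hs1
    have hcv : c.1 ≠ v := (Finset.mem_erase.mp c.2).1
    refine ⟨c.1, ?_, ?_⟩
    · rw [mem_nbr, adjB_comm, adjB_of_ne f hcv]
      exact hs2
    · rw [mkS_comm]
  
lemma depOn_cover_compl (v : Fin n) (W : Finset (Fin n)) (C : Fin n → Finset (Fin n))
    (hW : ∀ i ∈ W, i ≠ v) (hC : ∀ i, ∀ x ∈ C i, x ≠ v) :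
    DepOn (fun f : Slot n → Bool => ∀ i ∈ W, ∃ x ∈ C i, adjB f x i = true) (Row v)ᶜ := by
  intro f g hfg
  have hadj : ∀ i ∈ W, ∀ x ∈ C i, adjB f x i = adjB g x i := by
    intro i hi x hx
    by_cases hxi : x = i
    · subst hxi; rw [adjB_self, adjB_self]
    · rw [adjB_of_ne f hxi, adjB_of_ne g hxi]
      apply hfg
      rw [Finset.mem_compl, Row]
      exact not_mem_Jset hxi (hC i x hx) (hW i hi)
  constructor <;> intro h i hi
  · obtain ⟨x, hx1, hx2⟩ := h i hi
    exact ⟨x, hx1, by rw [← hadj i hi x hx1]; exact hx2⟩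
  · obtain ⟨x, hx1, hx2⟩ := h i hi
    exact ⟨x, hx1, by rw [hadj i hi x hx1]; exact hx2⟩

theorem vertex_bound (p : ℝ) (v : Fin n) (hp0 : 0 < p) (hp5 : p ≤ 1/5)
    (hα : (n:ℝ) * p * p ≤ 1) :
    pr p (fun f : Slot n → Bool => ¬ (∃ u w : Fin n,
        (adjB f v u = true) ∧ w ≠ v ∧ ¬(adjB f v w = true) ∧
        (∀ x : Fin n, x ≠ u → x ≠ v → ¬(adjB f x u = true ∧ adjB f x v = true)) ∧
        (∀ x : Fin n, x ≠ w → x ≠ v → ¬(adjB f x w = true ∧ adjB f x v = true))))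
    ≤ (2:ℝ) ^ (-(3*((n:ℝ)*p))) * (1+p) ^ (n-1)
      + (1/2:ℝ) ^ (-((n:ℝ)*p/2)) * (1-p/2) ^ (n-1)
      + ((499:ℝ)/500) ^ ((n:ℝ)*p/2)
      + ((499:ℝ)/500) ^ ((n:ℝ) - 1 - 3*((n:ℝ)*p)) := by
  classical
  have hp1 : p ≤ 1 := by linarith
  have hp0' : (0:ℝ) ≤ p := hp0.le
  set np := (n:ℝ) * p with hnp
  have hnp0 : 0 ≤ np := by positivity
  set r : ℝ := 499/500 with hr
  have hr0 : (0:ℝ) < r := by norm_num [hr]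
  have hr1 : r ≤ 1 := by norm_num [hr]
  set 𝒩 := (Finset.univ.erase v).powerset.filter
    (fun N₀ : Finset (Fin n) => np/2 ≤ (N₀.card:ℝ) ∧ (N₀.card:ℝ) ≤ 3*np) with h𝒩
  set uBad := fun (N₀ : Finset (Fin n)) (f : Slot n → Bool) =>
    ∀ i ∈ N₀, ∃ x ∈ N₀.erase i, adjB f x i = true with huBad
  set wBad := fun (N₀ : Finset (Fin n)) (f : Slot n → Bool) =>
    ∀ i ∈ Finset.univ \ insert v N₀, ∃ x ∈ N₀.erase i, adjB f x i = true with hwBad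
  set cylE := fun (N₀ : Finset (Fin n)) (f : Slot n → Bool) =>
    cyl (Row v) (patt N₀) f with hcylE
  -- STEP A : decomposition
  have stepA : ∀ f : Slot n → Bool, (¬ (∃ u w : Fin n,
        (adjB f v u = true) ∧ w ≠ v ∧ ¬(adjB f v w = true) ∧
        (∀ x : Fin n, x ≠ u → x ≠ v → ¬(adjB f x u = true ∧ adjB f x v = true)) ∧
        (∀ x : Fin n, x ≠ w → x ≠ v → ¬(adjB f x w = true ∧ adjB f x v = true)))) →
      (3*np ≤ (cnt (Row v) f : ℝ)) ∨ (((cnt (Row v) f : ℝ) ≤ np/2) ∨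
        (∃ N₀ ∈ 𝒩, (cylE N₀ f ∧ (uBad N₀ f ∨ wBad N₀ f)))) := by
    intro f hbad
    by_cases hb : 3*np ≤ (cnt (Row v) f : ℝ)
    · exact Or.inl hb
    by_cases hs : (cnt (Row v) f : ℝ) ≤ np/2
    · exact Or.inr (Or.inl hs)
    refine Or.inr (Or.inr ?_)
    set N₀ := Finset.univ.filter (fun u => adjB f v u = true) with hN₀
    have hcard : (N₀.card : ℝ) = (cnt (Row v) f : ℝ) := by rw [cnt_row]
    have hsub : N₀ ⊆ Finset.univ.erase v := by
      intro u hu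
      rw [hN₀, mem_nbr] at hu
      exact Finset.mem_erase.mpr ⟨(ne_of_adjB hu).symm, Finset.mem_univ u⟩
    have hvN₀ : v ∉ N₀ := fun hv => (Finset.mem_erase.mp (hsub hv)).1 rfl
    refine ⟨N₀, ?_, ?_, ?_⟩
    · rw [h𝒩, Finset.mem_filter, Finset.mem_powerset]
      refine ⟨hsub, ?_, ?_⟩
      · rw [hcard]; linarith
      · rw [hcard]; linarith
    · -- cylinder
      intro s hs'
      rw [Row] at hs'
      obtain ⟨c, rfl⟩ := mem_Jset.mp hs'
      have hcv : c.1 ≠ v := (Finset.mem_erase.mp c.2).1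
      rw [patt_mkS hcv hvN₀, ← adjB_of_ne f hcv]
      have hiff : (adjB f c.1 v = true) ↔ c.1 ∈ N₀ := by
        rw [hN₀, mem_nbr, adjB_comm]
      cases hb' : adjB f c.1 v
      · have : c.1 ∉ N₀ := fun hc => by simpa [hb'] using hiff.mpr hc
        simp [this]
      · simp [hiff.mp hb']
    · -- uBad or wBad
      by_contra hcon
      push_neg at hcon
      obtain ⟨hu, hw⟩ := hcon
      simp only [huBad] at hu
      simp only [hwBad] at hw
      push_neg at hu hw
      obtain ⟨u, huN, hugood⟩ := hu
      obtain ⟨w, hwW, hwgood⟩ := hw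
      rw [Finset.mem_sdiff, Finset.mem_insert] at hwW
      push_neg at hwW
      obtain ⟨-, hwv, hwN⟩ := hwW
      apply hbad
      refine ⟨u, w, ?_, hwv, ?_, ?_, ?_⟩
      · rw [hN₀, mem_nbr] at huN; exact huN
      · intro hadj
        exact hwN (by rw [hN₀, mem_nbr]; exact hadj)
      · intro x hxu hxv hcontra
        obtain ⟨h1, h2⟩ := hcontra
        have hxN : x ∈ N₀ := by
          rw [hN₀, mem_nbr, adjB_comm]; exact h2
        exact hugood x (Finset.mem_erase.mpr ⟨hxu, hxN⟩) h1
      · intro x hxw hxv hcontra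
        obtain ⟨h1, h2⟩ := hcontra
        have hxN : x ∈ N₀ := by
          rw [hN₀, mem_nbr, adjB_comm]; exact h2
        exact hwgood x (Finset.mem_erase.mpr ⟨hxw, hxN⟩) h1
  -- STEP B : union bound
  have stepB : pr p (fun f : Slot n → Bool => ¬ (∃ u w : Fin n,
        (adjB f v u = true) ∧ w ≠ v ∧ ¬(adjB f v w = true) ∧
        (∀ x : Fin n, x ≠ u → x ≠ v → ¬(adjB f x u = true ∧ adjB f x v = true)) ∧
        (∀ x : Fin n, x ≠ w → x ≠ v → ¬(adjB f x w = true ∧ adjB f x v = true))))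
      ≤ pr p (fun f => 3*np ≤ (cnt (Row v) f : ℝ))
        + pr p (fun f => (cnt (Row v) f : ℝ) ≤ np/2)
        + ∑ N₀ ∈ 𝒩, pr p (fun f => cylE N₀ f ∧ (uBad N₀ f ∨ wBad N₀ f)) := by
    calc pr p _ ≤ pr p (fun f => (3*np ≤ (cnt (Row v) f : ℝ)) ∨ (((cnt (Row v) f : ℝ) ≤ np/2) ∨
        (∃ N₀ ∈ 𝒩, (cylE N₀ f ∧ (uBad N₀ f ∨ wBad N₀ f))))) := pr_mono hp0' hp1 stepA
      _ ≤ pr p (fun f => 3*np ≤ (cnt (Row v) f : ℝ))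
          + pr p (fun f => ((cnt (Row v) f : ℝ) ≤ np/2) ∨
            (∃ N₀ ∈ 𝒩, (cylE N₀ f ∧ (uBad N₀ f ∨ wBad N₀ f)))) := pr_or_le hp0' hp1 _ _
      _ ≤ _ := by
          rw [add_assoc]
          apply add_le_add_right
          calc pr p _ ≤ pr p (fun f => (cnt (Row v) f : ℝ) ≤ np/2)
              + pr p (fun f => ∃ N₀ ∈ 𝒩, (cylE N₀ f ∧ (uBad N₀ f ∨ wBad N₀ f))) :=
                pr_or_le hp0' hp1 _ _
            _ ≤ _ := by
                apply add_le_add_right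
                exact pr_le_sum_of_exists hp0' hp1 𝒩 _ _ (fun f h => h)
  -- STEP C : per-N₀ bound
  have stepC : ∀ N₀ ∈ 𝒩, pr p (fun f => cylE N₀ f ∧ (uBad N₀ f ∨ wBad N₀ f))
      ≤ (p ^ N₀.card * (1-p) ^ ((n-1) - N₀.card)) * (r ^ (np/2) + r ^ ((n:ℝ) - 1 - 3*np)) := by
    intro N₀ hN₀
    rw [h𝒩, Finset.mem_filter, Finset.mem_powerset] at hN₀
    obtain ⟨hsub, hcard1, hcard2⟩ := hN₀
    have hvN₀ : v ∉ N₀ := fun hv => (Finset.mem_erase.mp (hsub hv)).1 rfl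
    -- numeric hypothesis for cover
    have hnum : ∀ i, (1 - p + p/r) ^ ((N₀.erase i).card) - (1-p) ^ ((N₀.erase i).card) ≤ r := by
      intro i
      apply numcore hp0' hp5
      calc ((N₀.erase i).card : ℝ) * p ≤ (N₀.card : ℝ) * p := by
            apply mul_le_mul_of_nonneg_right _ hp0'
            exact_mod_cast Finset.card_le_card (Finset.erase_subset _ _)
        _ ≤ (3*np) * p := mul_le_mul_of_nonneg_right hcard2 hp0'
        _ = 3 * (np * p) := by rw [hnp]; ring
        _ ≤ 16/5 := by linarith
    have hCne : ∀ i : Fin n, i ∉ N₀.erase i := fun i => Finset.notMem_erase i N₀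
    -- cover bounds
    have hcovU : pr p (fun f => uBad N₀ f) ≤ r ^ N₀.card := by
      rw [huBad]
      exact cover hp0' hp1 hr0 hr1 N₀.card N₀ (fun i => N₀.erase i) le_rfl hCne hnum
    have hcovW : pr p (fun f => wBad N₀ f) ≤ r ^ (Finset.univ \ insert v N₀).card := by
      rw [hwBad]
      exact cover hp0' hp1 hr0 hr1 _ _ (fun i => N₀.erase i) le_rfl hCne hnum
    -- depOn facts
    have hdepU : DepOn (fun f : Slot n → Bool => uBad N₀ f) (Row v)ᶜ := by
      rw [huBad]
      apply depOn_cover_compl v N₀ _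
      · intro i hi; exact (Finset.mem_erase.mp (hsub hi)).1
      · intro i x hx
        exact (Finset.mem_erase.mp (hsub (Finset.mem_of_mem_erase hx))).1
    have hdepW : DepOn (fun f : Slot n → Bool => wBad N₀ f) (Row v)ᶜ := by
      rw [hwBad]
      apply depOn_cover_compl v _ _
      · intro i hi
        rw [Finset.mem_sdiff, Finset.mem_insert] at hi
        push_neg at hi
        exact hi.2.1
      · intro i x hx
        exact (Finset.mem_erase.mp (hsub (Finset.mem_of_mem_erase hx))).1
    have hdepC : DepOn (fun f : Slot n → Bool => cylE N₀ f) (Row v) := by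
      rw [hcylE]; exact depOn_cyl _ _
    -- cylinder probability
    have hcylval : pr p (fun f : Slot n → Bool => cylE N₀ f)
        = p ^ N₀.card * (1-p) ^ ((n-1) - N₀.card) := by
      rw [hcylE]
      show pr p (cyl (Row v) (patt N₀)) = _
      rw [Row, pr_cyl_patt _ hsub, Finset.card_erase_of_mem (Finset.mem_univ v),
        Finset.card_univ, Fintype.card_fin]
    have hcylpos : (0:ℝ) ≤ p ^ N₀.card * (1-p) ^ ((n-1) - N₀.card) :=
      mul_nonneg (pow_nonneg hp0' _) (pow_nonneg (by linarith) _)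
    -- rpow bounds
    have hrpowU : (r : ℝ) ^ N₀.card ≤ r ^ (np/2) := by
      rw [← Real.rpow_natCast r N₀.card]
      exact Real.rpow_le_rpow_of_exponent_ge hr0 hr1 hcard1
    have hrpowW : (r : ℝ) ^ (Finset.univ \ insert v N₀).card ≤ r ^ ((n:ℝ) - 1 - 3*np) := by
      rw [← Real.rpow_natCast r _]
      apply Real.rpow_le_rpow_of_exponent_ge hr0 hr1
      have hc1 : (Finset.univ \ insert v N₀).card = n - (N₀.card + 1) := by
        rw [Finset.card_sdiff_of_subset (Finset.subset_univ _), Finset.card_univ, Fintype.card_fin,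
          Finset.card_insert_of_notMem hvN₀]
      have hc2 : N₀.card + 1 ≤ n := by
        calc N₀.card + 1 = (insert v N₀).card := (Finset.card_insert_of_notMem hvN₀).symm
          _ ≤ Finset.univ.card := Finset.card_le_card (Finset.subset_univ _)
          _ = n := by rw [Finset.card_univ, Fintype.card_fin]
      rw [hc1]
      have : ((n - (N₀.card + 1) : ℕ) : ℝ) = (n:ℝ) - ((N₀.card:ℝ) + 1) := by
        rw [Nat.cast_sub hc2]; push_cast; ring
      rw [this]
      linarith
    calc pr p (fun f => cylE N₀ f ∧ (uBad N₀ f ∨ wBad N₀ f))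
        ≤ pr p (fun f => (cylE N₀ f ∧ uBad N₀ f) ∨ (cylE N₀ f ∧ wBad N₀ f)) := by
          apply pr_mono hp0' hp1
          intro f hf
          rcases hf.2 with h | h
          · exact Or.inl ⟨hf.1, h⟩
          · exact Or.inr ⟨hf.1, h⟩
      _ ≤ pr p (fun f => cylE N₀ f ∧ uBad N₀ f) + pr p (fun f => cylE N₀ f ∧ wBad N₀ f) :=
          pr_or_le hp0' hp1 _ _
      _ = pr p (fun f : Slot n → Bool => cylE N₀ f) * pr p (fun f => uBad N₀ f)
          + pr p (fun f : Slot n → Bool => cylE N₀ f) * pr p (fun f => wBad N₀ f) := by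
          rw [indep hdepC hdepU, indep hdepC hdepW]
      _ ≤ (p ^ N₀.card * (1-p) ^ ((n-1) - N₀.card)) * (r ^ (np/2))
          + (p ^ N₀.card * (1-p) ^ ((n-1) - N₀.card)) * (r ^ ((n:ℝ) - 1 - 3*np)) := by
          rw [hcylval]
          apply add_le_add
          · exact mul_le_mul_of_nonneg_left (le_trans hcovU hrpowU) hcylpos
          · exact mul_le_mul_of_nonneg_left (le_trans hcovW hrpowW) hcylpos
      _ = _ := by ring
  -- STEP D : sum of cylinder probabilities
  have stepD : ∑ N₀ ∈ 𝒩, (p ^ N₀.card * (1-p) ^ ((n-1) - N₀.card)) ≤ 1 := by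
    have h1 : ∑ N₀ ∈ 𝒩, (p ^ N₀.card * (1-p) ^ ((n-1) - N₀.card))
        ≤ ∑ N₀ ∈ (Finset.univ.erase v).powerset, (p ^ N₀.card * (1-p) ^ ((n-1) - N₀.card)) := by
      apply Finset.sum_le_sum_of_subset_of_nonneg (Finset.filter_subset _ _)
      intro N₀ _ _
      exact mul_nonneg (pow_nonneg hp0' _) (pow_nonneg (by linarith) _)
    have hcarderase : (Finset.univ.erase v).card = n - 1 := by
      rw [Finset.card_erase_of_mem (Finset.mem_univ v), Finset.card_univ, Fintype.card_fin]
    have h2 := sum_powerset_pow p (1-p) (Finset.univ.erase v)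
    rw [hcarderase] at h2
    rw [show p + (1-p) = 1 by ring, one_pow] at h2
    exact h1.trans (le_of_eq h2)
  -- STEP E : Chernoff bounds
  have stepE1 : pr p (fun f => 3*np ≤ (cnt (Row v) f : ℝ))
      ≤ (2:ℝ) ^ (-(3*np)) * (1+p) ^ (n-1) := by
    have := chernoff_upper (p := p) (z := 2) (x := 3*np) hp0' hp1 (by norm_num) (Row v)
    rw [card_row] at this
    calc pr p _ ≤ (2:ℝ) ^ (-(3*np)) * (1 - p + p * 2) ^ (n-1) := this
      _ = (2:ℝ) ^ (-(3*np)) * (1+p) ^ (n-1) := by ring_nf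
  have stepE2 : pr p (fun f => (cnt (Row v) f : ℝ) ≤ np/2)
      ≤ (1/2:ℝ) ^ (-(np/2)) * (1-p/2) ^ (n-1) := by
    have := chernoff_lower (p := p) (z := 1/2) (x := np/2) hp0' hp1 (by norm_num)
      (by norm_num) (Row v)
    rw [card_row] at this
    calc pr p _ ≤ (1/2:ℝ) ^ (-(np/2)) * (1 - p + p * (1/2)) ^ (n-1) := this
      _ = (1/2:ℝ) ^ (-(np/2)) * (1-p/2) ^ (n-1) := by ring_nf
  -- combine
  have hRpos : (0:ℝ) ≤ r ^ (np/2) + r ^ ((n:ℝ) - 1 - 3*np) := by positivity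
  have hsumC : ∑ N₀ ∈ 𝒩, pr p (fun f => cylE N₀ f ∧ (uBad N₀ f ∨ wBad N₀ f))
      ≤ r ^ (np/2) + r ^ ((n:ℝ) - 1 - 3*np) := by
    calc ∑ N₀ ∈ 𝒩, pr p (fun f => cylE N₀ f ∧ (uBad N₀ f ∨ wBad N₀ f))
        ≤ ∑ N₀ ∈ 𝒩, (p ^ N₀.card * (1-p) ^ ((n-1) - N₀.card))
            * (r ^ (np/2) + r ^ ((n:ℝ) - 1 - 3*np)) := Finset.sum_le_sum stepC
      _ = (∑ N₀ ∈ 𝒩, (p ^ N₀.card * (1-p) ^ ((n-1) - N₀.card)))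
            * (r ^ (np/2) + r ^ ((n:ℝ) - 1 - 3*np)) := by rw [← Finset.sum_mul]
      _ ≤ 1 * (r ^ (np/2) + r ^ ((n:ℝ) - 1 - 3*np)) :=
            mul_le_mul_of_nonneg_right stepD hRpos
      _ = _ := by rw [one_mul]
  calc pr p _ ≤ _ := stepB
    _ ≤ (2:ℝ) ^ (-(3*np)) * (1+p) ^ (n-1) + (1/2:ℝ) ^ (-(np/2)) * (1-p/2) ^ (n-1)
        + (r ^ (np/2) + r ^ ((n:ℝ) - 1 - 3*np)) := by
        apply add_le_add (add_le_add stepE1 stepE2) hsumC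
    _ = _ := by rw [hr]; ring

end ERMain

open Filter Real

namespace ERLim

lemma limd {c δ : ℝ} (hc : 0 < c) (hδ : 0 < δ) :
    Tendsto (fun k : ℕ => (k:ℝ) * Real.exp (-(c * (k:ℝ)^δ))) atTop (nhds 0) := by
  have h1 : Tendsto (fun x : ℝ => Real.log x - c * x^δ) atTop atBot := by
    have hlo := (isLittleO_log_rpow_atTop hδ).def (show (0:ℝ) < c/2 by linarith)
    have hev : (fun x : ℝ => Real.log x - c * x^δ) ≤ᶠ[atTop]
        (fun x : ℝ => -(c/2 * x^δ)) := by
      filter_upwards [hlo, eventually_ge_atTop (1:ℝ)] with x hx hx1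
      have hxd : (0:ℝ) ≤ x ^ δ := Real.rpow_nonneg (by linarith) δ
      rw [Real.norm_eq_abs, Real.norm_eq_abs, abs_of_nonneg hxd] at hx
      have : Real.log x ≤ c/2 * x^δ := le_trans (le_abs_self _) hx
      linarith
    apply tendsto_atBot_mono' atTop hev
    have h2 : Tendsto (fun x : ℝ => c/2 * x^δ) atTop atTop :=
      Tendsto.const_mul_atTop (by linarith) (tendsto_rpow_atTop hδ)
    exact tendsto_neg_atTop_atBot.comp h2
  have h4 : Tendsto (fun x : ℝ => Real.exp (Real.log x - c * x^δ)) atTop (nhds 0) :=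
    Real.tendsto_exp_atBot.comp h1
  have h5 : Tendsto (fun x : ℝ => x * Real.exp (-(c * x^δ))) atTop (nhds 0) := by
    apply h4.congr'
    filter_upwards [eventually_gt_atTop (0:ℝ)] with x hx
    rw [Real.exp_sub, Real.exp_log hx]
    rw [Real.exp_neg]
    field_simp
  exact h5.comp tendsto_natCast_atTop_atTop

/-- squeeze-to-zero helper -/
lemma sq0 {f g : ℕ → ℝ} (h0 : ∀ᶠ k in atTop, 0 ≤ f k) (h1 : ∀ᶠ k in atTop, f k ≤ g k)
    (hg : Tendsto g atTop (nhds 0)) : Tendsto f atTop (nhds 0) :=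
  squeeze_zero' h0 h1 hg

end ERLim

namespace ERTool
variable {ι : Type*} [Fintype ι] [DecidableEq ι]

lemma pr_add_compl {p : ℝ} (E : (ι → Bool) → Prop) :
    pr p E + pr p (fun f => ¬ E f) = 1 := by
  classical
  rw [pr, pr, ← Finset.sum_add_distrib]
  rw [show (1:ℝ) = ∑ f : ι → Bool, wt p f from sum_wt.symm]
  refine Finset.sum_congr rfl fun f _ => ?_
  by_cases hE : E f <;> simp [hE]

end ERTool



open Filter

-- `graphProb n p A` is the probability that the Erdős–Rényi random graph `G(n,p)` (each
-- of the `C(n,2)` possible edges present independently with probability `p`) satisfies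
-- the property `A`.
open Classical in
noncomputable def graphProb (n : ℕ) (p : ℝ) (A : SimpleGraph (Fin n) → Prop) : ℝ :=
  ∑ G : SimpleGraph (Fin n),
    if A G then p ^ (Nat.card G.edgeSet) * (1 - p) ^ (n.choose 2 - Nat.card G.edgeSet) else 0

lemma graphProb_eq_pr (n : ℕ) (p : ℝ) (A : SimpleGraph (Fin n) → Prop) :
    graphProb n p A = ERTool.pr p (fun f : ERGraph.Slot n → Bool => A (ERGraph.graphOf f)) :=
  ERGraph.graphProb_eq p A

open ERTool ERTool2 ERGraph ERCover ERNum ERMain ERLim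

/-- For `1/2 ≤ α < 1` and `p = n^{-α}`, a.a.s. for every vertex `v` of
`G(n,p)` there are vertices `u ~ v` and `w ≁ v` (`w ≠ v`) such that neither `u, v` nor
`w, v` have a common neighbor. -/
theorem aas_neighbors_without_common (α : ℝ) (h0 : 1 / 2 ≤ α) (h1 : α < 1) :
    Tendsto (fun n : ℕ => graphProb n ((n : ℝ) ^ (-α)) (fun G =>
        ∀ v : Fin n, ∃ u w : Fin n,
          G.Adj v u ∧ w ≠ v ∧ ¬ G.Adj v w ∧
          (∀ x : Fin n, x ≠ u → x ≠ v → ¬ (G.Adj x u ∧ G.Adj x v)) ∧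
          (∀ x : Fin n, x ≠ w → x ≠ v → ¬ (G.Adj x w ∧ G.Adj x v))))
      atTop (nhds 1) := by
  classical
  set P : ℕ → ℝ := fun n => (n:ℝ) ^ (-α) with hP
  set r : ℝ := 499/500 with hr
  have hr0 : (0:ℝ) < r := by norm_num [hr]
  have hr1 : r < 1 := by norm_num [hr]
  set B : ℕ → ℝ := fun n =>
      (2:ℝ) ^ (-(3*((n:ℝ)*P n))) * (1+P n) ^ (n-1)
      + (1/2:ℝ) ^ (-((n:ℝ)*P n/2)) * (1-P n/2) ^ (n-1)
      + r ^ ((n:ℝ)*P n/2)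
      + r ^ ((n:ℝ) - 1 - 3*((n:ℝ)*P n)) with hB
  set err : ℕ → ℝ := fun n => (n:ℝ) * B n with herr
  -- basic eventual facts about P
  have hPpos : ∀ n : ℕ, 1 ≤ n → 0 < P n := by
    intro n hn
    apply Real.rpow_pos_of_pos
    exact_mod_cast hn
  have hP5 : ∀ n : ℕ, 25 ≤ n → P n ≤ 1/5 := by
    intro n hn
    have hn1 : (1:ℝ) ≤ (n:ℝ) := by exact_mod_cast le_trans (by norm_num) hn
    have hn25 : (25:ℝ) ≤ (n:ℝ) := by exact_mod_cast hn
    have h2 : P n ≤ (n:ℝ) ^ (-(1/2:ℝ)) := by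
      rw [hP]
      apply Real.rpow_le_rpow_of_exponent_le hn1
      linarith
    have h3 : (n:ℝ) ^ (-(1/2:ℝ)) ≤ 1/5 := by
      rw [Real.rpow_neg (by linarith)]
      rw [show (1:ℝ)/5 = ((5:ℝ))⁻¹ by norm_num]
      apply inv_anti₀ (by norm_num)
      calc (5:ℝ) = (25:ℝ) ^ ((1:ℝ)/2) := by
            rw [show (25:ℝ) = (5:ℝ)^(2:ℕ) by norm_num, ← Real.rpow_natCast (5:ℝ) 2,
              ← Real.rpow_mul (by norm_num)]
            norm_num
        _ ≤ (n:ℝ) ^ ((1:ℝ)/2) := Real.rpow_le_rpow (by norm_num) hn25 (by norm_num)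
    linarith
  have hPα : ∀ n : ℕ, 1 ≤ n → (n:ℝ) * P n * P n ≤ 1 := by
    intro n hn
    have hn0 : (0:ℝ) < (n:ℝ) := by exact_mod_cast hn
    have hn1 : (1:ℝ) ≤ (n:ℝ) := by exact_mod_cast hn
    have : (n:ℝ) * P n * P n = (n:ℝ) ^ (1 - α - α) := by
      rw [hP, show (1:ℝ) - α - α = 1 + (-α) + (-α) by ring,
        Real.rpow_add hn0, Real.rpow_add hn0, Real.rpow_one]
    rw [this]
    apply Real.rpow_le_one_of_one_le_of_nonpos hn1
    linarith
  have hm : ∀ n : ℕ, 1 ≤ n → (n:ℝ) * P n = (n:ℝ) ^ (1 - α) := by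
    intro n hn
    have hn0 : (0:ℝ) < (n:ℝ) := by exact_mod_cast hn
    rw [hP, show (1:ℝ) - α = 1 + (-α) by ring, Real.rpow_add hn0, Real.rpow_one]
  -- eventual sandwich
  have hup : ∀ᶠ n : ℕ in atTop, graphProb n (P n) (fun G =>
        ∀ v : Fin n, ∃ u w : Fin n,
          G.Adj v u ∧ w ≠ v ∧ ¬ G.Adj v w ∧
          (∀ x : Fin n, x ≠ u → x ≠ v → ¬ (G.Adj x u ∧ G.Adj x v)) ∧
          (∀ x : Fin n, x ≠ w → x ≠ v → ¬ (G.Adj x w ∧ G.Adj x v))) ≤ 1 := by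
    filter_upwards [eventually_ge_atTop 25] with n hn
    have hp0 := hPpos n (by omega)
    have hp5 := hP5 n hn
    rw [graphProb_eq_pr]
    exact pr_le_one hp0.le (by linarith) _
  have hlow : ∀ᶠ n : ℕ in atTop, 1 - err n ≤ graphProb n (P n) (fun G =>
        ∀ v : Fin n, ∃ u w : Fin n,
          G.Adj v u ∧ w ≠ v ∧ ¬ G.Adj v w ∧
          (∀ x : Fin n, x ≠ u → x ≠ v → ¬ (G.Adj x u ∧ G.Adj x v)) ∧
          (∀ x : Fin n, x ≠ w → x ≠ v → ¬ (G.Adj x w ∧ G.Adj x v))) := by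
    filter_upwards [eventually_ge_atTop 25] with n hn
    have hp0 := hPpos n (by omega)
    have hp5 := hP5 n hn
    have hp1 : P n ≤ 1 := by linarith
    have hα := hPα n (by omega)
    rw [graphProb_eq_pr]
    set E : (Slot n → Bool) → Prop := fun f =>
        ∀ v : Fin n, ∃ u w : Fin n,
          (adjB f v u = true) ∧ w ≠ v ∧ ¬ (adjB f v w = true) ∧
          (∀ x : Fin n, x ≠ u → x ≠ v → ¬ ((adjB f x u = true) ∧ (adjB f x v = true))) ∧
          (∀ x : Fin n, x ≠ w → x ≠ v → ¬ ((adjB f x w = true) ∧ (adjB f x v = true)))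
      with hE
    have hcompl := pr_add_compl (p := P n) E
    have hbad : pr (P n) (fun f => ¬ E f) ≤ err n := by
      have hsum : pr (P n) (fun f => ¬ E f)
          ≤ ∑ v ∈ (Finset.univ : Finset (Fin n)), pr (P n) (fun f : Slot n → Bool =>
            ¬ (∃ u w : Fin n,
              (adjB f v u = true) ∧ w ≠ v ∧ ¬(adjB f v w = true) ∧
              (∀ x : Fin n, x ≠ u → x ≠ v → ¬(adjB f x u = true ∧ adjB f x v = true)) ∧
              (∀ x : Fin n, x ≠ w → x ≠ v → ¬(adjB f x w = true ∧ adjB f x v = true)))) := by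
        apply pr_le_sum_of_exists hp0.le hp1
        intro f hf
        rw [hE] at hf
        rw [not_forall] at hf
        obtain ⟨v, hv⟩ := hf
        exact ⟨v, Finset.mem_univ v, fun hcon => hv hcon⟩
      refine hsum.trans ?_
      calc ∑ v ∈ (Finset.univ : Finset (Fin n)), pr (P n) (fun f : Slot n → Bool =>
            ¬ (∃ u w : Fin n,
              (adjB f v u = true) ∧ w ≠ v ∧ ¬(adjB f v w = true) ∧
              (∀ x : Fin n, x ≠ u → x ≠ v → ¬(adjB f x u = true ∧ adjB f x v = true)) ∧
              (∀ x : Fin n, x ≠ w → x ≠ v → ¬(adjB f x w = true ∧ adjB f x v = true))))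
          ≤ ∑ _v ∈ (Finset.univ : Finset (Fin n)), B n :=
            Finset.sum_le_sum fun v _ => by
              rw [hB]
              exact vertex_bound (P n) v hp0 hp5 hα
        _ = (n:ℝ) * B n := by
            rw [Finset.sum_const, Finset.card_univ, Fintype.card_fin, nsmul_eq_mul]
        _ = err n := by rw [herr]
    have hEnonneg := pr_nonneg (p := P n) hp0.le hp1 E
    have hgoal : 1 - err n ≤ pr (P n) E := by linarith
    exact le_trans hgoal (le_of_eq rfl)
  -- limits
  have hδ : 0 < 1 - α := by linarith
  have hc1 : (0:ℝ) < 3 * Real.log 2 - 1 := by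
    have := Real.log_two_gt_d9; linarith
  have hc2 : (0:ℝ) < (1 - Real.log 2)/2 := by
    have := Real.log_two_lt_d9; linarith
  have hlogr : Real.log r < 0 := Real.log_neg hr0 hr1
  have hT1 : Tendsto (fun n : ℕ =>
      (n:ℝ) * ((2:ℝ) ^ (-(3*((n:ℝ)*P n))) * (1+P n) ^ (n-1))) atTop (nhds 0) := by
    apply sq0 (g := fun n : ℕ => (n:ℝ) * Real.exp (-((3 * Real.log 2 - 1) * (n:ℝ)^(1-α))))
    · filter_upwards [eventually_ge_atTop 1] with n hn
      have hp0 := hPpos n hn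
      positivity
    · filter_upwards [eventually_ge_atTop 1] with n hn
      have hp0 := hPpos n hn
      have hnn : (0:ℝ) ≤ (n:ℝ) := by positivity
      apply mul_le_mul_of_nonneg_left _ hnn
      have e1 : (2:ℝ) ^ (-(3*((n:ℝ)*P n))) = Real.exp (Real.log 2 * (-(3*((n:ℝ)*P n)))) := by
        rw [Real.rpow_def_of_pos (by norm_num)]
      have e2 : (1+P n) ^ (n-1) ≤ Real.exp ((n:ℝ)*P n) := by
        calc (1+P n) ^ (n-1) ≤ (Real.exp (P n)) ^ (n-1) := by
              apply pow_le_pow_left₀ (by linarith)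
              have := Real.add_one_le_exp (P n); linarith
          _ = Real.exp (((n-1:ℕ):ℝ) * P n) := by rw [← Real.exp_nat_mul]
          _ ≤ Real.exp ((n:ℝ)*P n) := by
              apply Real.exp_le_exp.mpr
              apply mul_le_mul_of_nonneg_right _ hp0.le
              exact_mod_cast Nat.sub_le n 1
      calc (2:ℝ) ^ (-(3*((n:ℝ)*P n))) * (1+P n) ^ (n-1)
          ≤ Real.exp (Real.log 2 * (-(3*((n:ℝ)*P n)))) * Real.exp ((n:ℝ)*P n) := by
            rw [e1]
            exact mul_le_mul_of_nonneg_left e2 (Real.exp_nonneg _)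
        _ = Real.exp ((n:ℝ)*P n * (1 - 3 * Real.log 2)) := by
            rw [← Real.exp_add]; ring_nf
        _ = Real.exp (-((3 * Real.log 2 - 1) * (n:ℝ)^(1-α))) := by
            rw [← hm n hn]; ring_nf
    · exact limd hc1 hδ
  have hT2 : Tendsto (fun n : ℕ =>
      (n:ℝ) * ((1/2:ℝ) ^ (-((n:ℝ)*P n/2)) * (1-P n/2) ^ (n-1))) atTop (nhds 0) := by
    apply sq0 (g := fun n : ℕ => Real.exp 1 *
      ((n:ℝ) * Real.exp (-(((1 - Real.log 2)/2) * (n:ℝ)^(1-α)))))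
    · filter_upwards [eventually_ge_atTop 25] with n hn
      have hp0 := hPpos n (by omega)
      have hp5 := hP5 n hn
      have h12 : (0:ℝ) ≤ 1 - P n/2 := by linarith
      positivity
    · filter_upwards [eventually_ge_atTop 25] with n hn
      have hp0 := hPpos n (by omega)
      have hp5 := hP5 n hn
      have hnn : (0:ℝ) ≤ (n:ℝ) := by positivity
      rw [show Real.exp 1 * ((n:ℝ) * Real.exp (-(((1 - Real.log 2)/2) * (n:ℝ)^(1-α))))
        = (n:ℝ) * (Real.exp 1 * Real.exp (-(((1 - Real.log 2)/2) * (n:ℝ)^(1-α)))) by ring]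
      apply mul_le_mul_of_nonneg_left _ hnn
      have e1 : (1/2:ℝ) ^ (-((n:ℝ)*P n/2)) = Real.exp (Real.log 2 * ((n:ℝ)*P n/2)) := by
        rw [Real.rpow_def_of_pos (by norm_num), show Real.log (1/2) = - Real.log 2 by
          rw [one_div, Real.log_inv]]
        ring_nf
      have e2 : (1-P n/2) ^ (n-1) ≤ Real.exp (-(((n-1:ℕ):ℝ) * (P n/2))) := by
        calc (1-P n/2) ^ (n-1) ≤ (Real.exp (-(P n/2))) ^ (n-1) := by
              apply pow_le_pow_left₀ (by linarith)
              have := Real.add_one_le_exp (-(P n/2)); linarith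
          _ = Real.exp (((n-1:ℕ):ℝ) * (-(P n/2))) := by rw [← Real.exp_nat_mul]
          _ = Real.exp (-(((n-1:ℕ):ℝ) * (P n/2))) := by ring_nf
      have hcast : ((n-1:ℕ):ℝ) = (n:ℝ) - 1 := by
        rw [Nat.cast_sub (by omega)]; norm_num
      calc (1/2:ℝ) ^ (-((n:ℝ)*P n/2)) * (1-P n/2) ^ (n-1)
          ≤ Real.exp (Real.log 2 * ((n:ℝ)*P n/2)) * Real.exp (-(((n-1:ℕ):ℝ) * (P n/2))) := by
            rw [e1]
            exact mul_le_mul_of_nonneg_left e2 (Real.exp_nonneg _)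
        _ = Real.exp (Real.log 2 * ((n:ℝ)*P n/2) + -(((n-1:ℕ):ℝ) * (P n/2))) := by
            rw [← Real.exp_add]
        _ ≤ Real.exp 1 * Real.exp (-(((1 - Real.log 2)/2) * (n:ℝ)^(1-α))) := by
            rw [← Real.exp_add]
            apply Real.exp_le_exp.mpr
            rw [hcast, ← hm n (by omega)]
            have h5 : P n / 2 ≤ 1 := by linarith
            nlinarith [hp0.le]
    · have := (limd hc2 hδ).const_mul (Real.exp 1)
      simpa using this
  have hT3 : Tendsto (fun n : ℕ => (n:ℝ) * r ^ ((n:ℝ)*P n/2)) atTop (nhds 0) := by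
    apply sq0 (g := fun n : ℕ => (n:ℝ) * Real.exp (-((-Real.log r/2) * (n:ℝ)^(1-α))))
    · filter_upwards [eventually_ge_atTop 1] with n hn
      have hp0 := hPpos n hn
      positivity
    · filter_upwards [eventually_ge_atTop 1] with n hn
      have hnn : (0:ℝ) ≤ (n:ℝ) := by positivity
      apply mul_le_mul_of_nonneg_left _ hnn
      rw [Real.rpow_def_of_pos hr0, ← hm n hn]
      apply Real.exp_le_exp.mpr
      apply le_of_eq
      ring
    · exact limd (by linarith) hδ
  have hT4 : Tendsto (fun n : ℕ => (n:ℝ) * r ^ ((n:ℝ) - 1 - 3*((n:ℝ)*P n))) atTop (nhds 0) := by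
    apply sq0 (g := fun n : ℕ => (n:ℝ) * Real.exp (-((-Real.log r/2) * (n:ℝ)^(1:ℝ))))
    · filter_upwards [eventually_ge_atTop 1] with n hn
      positivity
    · filter_upwards [eventually_ge_atTop 64] with n hn
      have hn1 : (1:ℝ) ≤ (n:ℝ) := by exact_mod_cast le_trans (by norm_num) hn
      have hn0 : (0:ℝ) < (n:ℝ) := by linarith
      have hnn : (0:ℝ) ≤ (n:ℝ) := by linarith
      apply mul_le_mul_of_nonneg_left _ hnn
      set s : ℝ := (n:ℝ) ^ ((1:ℝ)/2) with hs
      have hss : s * s = (n:ℝ) := by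
        rw [hs, ← Real.rpow_add hn0]
        norm_num
      have h8 : (8:ℝ) ≤ s := by
        rw [hs]
        calc (8:ℝ) = (64:ℝ) ^ ((1:ℝ)/2) := by
              rw [show (64:ℝ) = (8:ℝ)^(2:ℕ) by norm_num, ← Real.rpow_natCast (8:ℝ) 2,
                ← Real.rpow_mul (by norm_num)]
              norm_num
          _ ≤ (n:ℝ) ^ ((1:ℝ)/2) := Real.rpow_le_rpow (by norm_num) (by exact_mod_cast hn)
              (by norm_num)
      have hmle : (n:ℝ) * P n ≤ s := by
        rw [hm n (by omega), hs]
        apply Real.rpow_le_rpow_of_exponent_le hn1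
        linarith
      have hhalf : (n:ℝ)/2 ≤ (n:ℝ) - 1 - 3*((n:ℝ)*P n) := by
        nlinarith
      rw [Real.rpow_def_of_pos hr0]
      apply Real.exp_le_exp.mpr
      calc Real.log r * ((n:ℝ) - 1 - 3*((n:ℝ)*P n)) ≤ Real.log r * ((n:ℝ)/2) := by
            apply mul_le_mul_of_nonpos_left hhalf (le_of_lt hlogr)
        _ = -((-Real.log r/2) * (n:ℝ)^(1:ℝ)) := by
            rw [Real.rpow_one]; ring
    · exact limd (by linarith) one_pos
  have herr0 : Tendsto err atTop (nhds 0) := by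
    have hsplit : err = fun n : ℕ =>
        (n:ℝ) * ((2:ℝ) ^ (-(3*((n:ℝ)*P n))) * (1+P n) ^ (n-1))
        + ((n:ℝ) * ((1/2:ℝ) ^ (-((n:ℝ)*P n/2)) * (1-P n/2) ^ (n-1))
        + ((n:ℝ) * r ^ ((n:ℝ)*P n/2)
        + (n:ℝ) * r ^ ((n:ℝ) - 1 - 3*((n:ℝ)*P n)))) := by
      funext n
      rw [herr, hB]
      ring
    rw [hsplit]
    simpa using hT1.add (hT2.add (hT3.add hT4))
  have hlim1 : Tendsto (fun n : ℕ => 1 - err n) atTop (nhds 1) := by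
    have h := herr0.const_sub (1:ℝ)
    simpa using h
  exact tendsto_of_tendsto_of_tendsto_of_le_of_le' hlim1 tendsto_const_nhds hlow hup
end

section
/- Let 0 < α < 2/3 and p = n^{-α}. Then a.a.s. there is no vertex v in G(n,p) whose neighborhood N(v) is an independent set; i.e., the probability that some vertex has an independent neighborhood tends to 0 as n → ∞. -/
open Filter

namespace AuxER

open Finset

attribute [local instance] Classical.propDecidable

variable {n : ℕ}

abbrev En (n : ℕ) := {e : Sym2 (Fin n) // ¬ e.IsDiag}

noncomputable def graphOf (ω : En n → Bool) : SimpleGraph (Fin n) :=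
  SimpleGraph.fromEdgeSet {e | ∃ h : ¬ e.IsDiag, ω ⟨e, h⟩ = true}

lemma mem_edgeSet_graphOf (ω : En n → Bool) (e : En n) :
    e.1 ∈ (graphOf ω).edgeSet ↔ ω e = true := by
  rw [graphOf, SimpleGraph.edgeSet_fromEdgeSet]
  constructor
  · rintro ⟨⟨h, hω⟩, -⟩; exact hω
  · intro h; exact ⟨⟨e.2, h⟩, e.2⟩

lemma adj_graphOf (ω : En n → Bool) {x y : Fin n} (hxy : x ≠ y) :
    (graphOf ω).Adj x y ↔ ω ⟨s(x,y), by simp [Sym2.mk_isDiag_iff, hxy]⟩ = true := by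
  rw [← SimpleGraph.mem_edgeSet]
  exact mem_edgeSet_graphOf ω ⟨s(x,y), by simp [Sym2.mk_isDiag_iff, hxy]⟩

noncomputable def graphEquiv (n : ℕ) : SimpleGraph (Fin n) ≃ (En n → Bool) where
  toFun G e := decide (e.1 ∈ G.edgeSet)
  invFun := graphOf
  left_inv G := by
    ext x y
    by_cases hxy : x = y
    · subst hxy; simp
    · rw [adj_graphOf _ hxy, decide_eq_true_iff, SimpleGraph.mem_edgeSet]
  right_inv ω := by
    funext e
    by_cases h : ω e = true
    · simp [mem_edgeSet_graphOf, h]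
    · simp only [Bool.not_eq_true] at h
      simp [mem_edgeSet_graphOf, h]

lemma card_edgeSet_graphOf (ω : En n → Bool) :
    Nat.card (graphOf ω).edgeSet = (univ.filter (fun e : En n => ω e = true)).card := by
  have eqv : (graphOf ω).edgeSet ≃ {e : En n // ω e = true} :=
    { toFun := fun x => ⟨⟨x.1, (graphOf ω).not_isDiag_of_mem_edgeSet x.2⟩,
        (mem_edgeSet_graphOf ω ⟨x.1, (graphOf ω).not_isDiag_of_mem_edgeSet x.2⟩).1 x.2⟩
      invFun := fun y => ⟨y.1.1, (mem_edgeSet_graphOf ω y.1).2 y.2⟩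
      left_inv := fun x => rfl
      right_inv := fun y => rfl }
  rw [Nat.card_congr eqv, Nat.card_eq_fintype_card, Fintype.card_subtype]

lemma card_En : Fintype.card (En n) = n.choose 2 := by
  simpa using Sym2.card_subtype_not_diag (α := Fin n)

noncomputable def w (p : ℝ) (ω : En n → Bool) : ℝ := ∏ e : En n, (if ω e then p else 1 - p)

lemma w_eq (p : ℝ) (ω : En n → Bool) :
    w p ω = p ^ (Nat.card (graphOf ω).edgeSet) *
      (1 - p) ^ (n.choose 2 - Nat.card (graphOf ω).edgeSet) := by
  rw [card_edgeSet_graphOf, w, Finset.prod_ite, Finset.prod_const, Finset.prod_const]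
  have h1 : (univ.filter fun e : En n => ω e) = (univ.filter fun e : En n => ω e = true) := by
    ext e; simp
  have h2 : (univ.filter fun e : En n => ¬ (ω e : Prop)).card
      = n.choose 2 - (univ.filter fun e : En n => ω e = true).card := by
    rw [← card_En (n := n), ← Finset.card_univ, ← h1,
      ← Finset.card_filter_add_card_filter_not (s := (univ : Finset (En n)))
      (p := fun e : En n => (ω e : Prop))]
    simp
  rw [h1, h2]

lemma w_nonneg {p : ℝ} (hp0 : 0 ≤ p) (hp1 : p ≤ 1) (ω : En n → Bool) : 0 ≤ w p ω :=
  Finset.prod_nonneg fun e _ => by split <;> linarith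


lemma graphEquiv_symm_eq (ω : En n → Bool) : (graphEquiv n).symm ω = graphOf ω := rfl

lemma graphProb_eq (p : ℝ) (A : SimpleGraph (Fin n) → Prop)
    [D : ∀ ω : En n → Bool, Decidable (A (graphOf ω))] :
    graphProb n p A = ∑ ω : En n → Bool, if A (graphOf ω) then w p ω else 0 := by
  rw [graphProb, ← Equiv.sum_comp (graphEquiv n).symm]
  refine Finset.sum_congr rfl fun ω _ => ?_
  rw [graphEquiv_symm_eq]
  by_cases h : A (graphOf ω)
  · rw [if_pos h, if_pos h, w_eq]
  · rw [if_neg h, if_neg h]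

lemma sum_w_prod (p : ℝ) (h : En n → Bool → ℝ) :
    ∑ ω : En n → Bool, w p ω * ∏ e, h e (ω e)
      = ∏ e : En n, (p * h e true + (1 - p) * h e false) := by
  have key : ∀ ω : En n → Bool, w p ω * ∏ e, h e (ω e)
      = ∏ e, (fun (e : En n) (b : Bool) => (if b then p else 1 - p) * h e b) e (ω e) := by
    intro ω
    rw [w, ← Finset.prod_mul_distrib]
  have h2 := Fintype.prod_sum (κ := fun _ : En n => Bool)
    (fun (e : En n) (b : Bool) => (if b then p else 1 - p) * h e b)
  rw [Finset.sum_congr rfl fun ω _ => key ω, ← h2]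
  refine Finset.prod_congr rfl fun e _ => ?_
  rw [Fintype.sum_bool]
  simp


lemma mem_iff_exists (v : Fin n) (e : En n) : v ∈ e.1 ↔ ∃ u, e.1 = s(v, u) := by
  constructor
  · intro h; exact ⟨Sym2.Mem.other h, (Sym2.other_spec h).symm⟩
  · rintro ⟨u, hu⟩; rw [hu]; exact Sym2.mem_mk_left v u

/-- Key counting bijection: edges at `v` with other endpoint satisfying `P`. -/
lemma card_filter_eq (v : Fin n) (P : Fin n → Prop)
    {D1 : DecidablePred fun e : En n => ∃ u, P u ∧ e.1 = s(v, u)}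
    {D2 : DecidablePred fun u : Fin n => u ≠ v ∧ P u} :
    (@filter _ _ D1 univ).card = (@filter _ _ D2 univ).card := by
  symm
  refine Finset.card_bij (fun u hu => (⟨s(v, u), by
    simp only [mem_filter] at hu
    simp only [Sym2.mk_isDiag_iff]; exact fun h => hu.2.1 h.symm⟩ : En n)) ?_ ?_ ?_
  · intro u hu
    simp only [mem_filter] at hu ⊢
    exact ⟨mem_univ _, u, hu.2.2, rfl⟩
  · intro u hu u' hu' h
    simp only [Subtype.mk.injEq] at h
    exact Sym2.congr_right.mp h
  · rintro ⟨e, he⟩ hmem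
    simp only [mem_filter] at hmem
    obtain ⟨-, u, hPu, hu⟩ := hmem
    have huv : u ≠ v := by
      rintro rfl; apply he; rw [hu]; exact Sym2.mk_isDiag_iff.mpr rfl
    exact ⟨u, by simp [huv, hPu], by simp [hu]⟩

lemma card_filter_ne (v : Fin n) (P : Fin n → Prop)
    {D2 : DecidablePred fun u : Fin n => u ≠ v ∧ P u}
    {D3 : DecidablePred P} :
    (@filter _ _ D2 univ) = (@filter _ _ D3 univ).erase v := by
  ext u
  simp only [mem_filter, mem_erase, mem_univ, true_and]

lemma card_filter_mem (v : Fin n)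
    {D : DecidablePred fun e : En n => v ∈ e.1} :
    (@filter _ _ D univ).card = n - 1 := by
  have h0 : (@filter _ _ D univ)
      = (univ.filter fun e : En n => ∃ u, True ∧ e.1 = s(v, u)) := by
    apply filter_congr; intro e _
    simpa using mem_iff_exists v e
  rw [h0, card_filter_eq v (fun _ => True) (D2 := fun _ => inferInstance), card_filter_ne v (fun _ => True) (D3 := fun _ => inferInstance)]
  rw [filter_true, Finset.card_erase_of_mem (mem_univ v), Finset.card_univ, Fintype.card_fin]

/-- Count of edges inside `S`. -/
lemma card_filter_subset (S : Finset (Fin n))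
    {D : DecidablePred fun e : En n => ∀ x ∈ e.1, x ∈ S} :
    (@filter _ _ D univ).card = S.card.choose 2 := by
  rw [← Sym2.card_image_offDiag]
  refine Finset.card_bij (fun e _ => e.1) ?_ ?_ ?_
  · rintro ⟨e, he⟩ hmem
    simp only [mem_filter] at hmem
    induction e using Sym2.ind with
    | _ x y =>
      have hxy : x ≠ y := by simpa [Sym2.mk_isDiag_iff] using he
      simp only [Finset.mem_image]
      exact ⟨(x, y), Finset.mem_offDiag.mpr ⟨hmem.2 x (Sym2.mem_mk_left x y),
        hmem.2 y (Sym2.mem_mk_right x y), hxy⟩, rfl⟩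
  · intro e he e' he' h
    exact Subtype.ext h
  · intro z hz
    simp only [Finset.mem_image] at hz
    obtain ⟨⟨x, y⟩, hxy, rfl⟩ := hz
    rw [Finset.mem_offDiag] at hxy
    refine ⟨⟨s(x, y), by simp [Sym2.mk_isDiag_iff, hxy.2.2]⟩, ?_, rfl⟩
    simp only [mem_filter]
    refine ⟨mem_univ _, fun u hu => ?_⟩
    rcases Sym2.mem_iff.mp hu with rfl | rfl
    · exact hxy.1
    · exact hxy.2.1

lemma card_filter_adj (ω : En n → Bool) (v : Fin n)
    {D : DecidablePred fun e : En n => v ∈ e.1 ∧ ω e = true} :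
    (@filter _ _ D univ).card = ((graphOf ω).neighborFinset v).card := by
  have h1 : (@filter _ _ D univ)
      = (univ.filter fun e : En n => ∃ u, (graphOf ω).Adj v u ∧ e.1 = s(v, u)) := by
    apply filter_congr; intro e _
    constructor
    · rintro ⟨hv, hω⟩
      obtain ⟨u, hu⟩ := (mem_iff_exists v e).mp hv
      refine ⟨u, ?_, hu⟩
      rw [← SimpleGraph.mem_edgeSet, ← hu]
      exact (mem_edgeSet_graphOf ω e).mpr hω
    · rintro ⟨u, hadj, hu⟩
      refine ⟨(mem_iff_exists v e).mpr ⟨u, hu⟩, ?_⟩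
      rw [← mem_edgeSet_graphOf ω e, hu]
      exact hadj
  rw [h1, card_filter_eq v ((graphOf ω).Adj v) (D2 := fun _ => inferInstance)]
  congr 1
  ext u
  simp only [mem_filter, SimpleGraph.mem_neighborFinset, mem_univ, true_and]
  exact ⟨fun h => h.2, fun h => ⟨h.ne', h⟩⟩

noncomputable def h1 (v : Fin n) (e : En n) (b : Bool) : ℝ :=
  if v ∈ e.1 ∧ b = true then 1/2 else 1

noncomputable def T1 (k : ℕ) (v : Fin n) (ω : En n → Bool) : ℝ :=
  2^k * ∏ e : En n, h1 v e (ω e)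

noncomputable def g (v : Fin n) (S : Finset (Fin n)) (e : En n) (b : Bool) : ℝ :=
  if ∃ u ∈ S, e.1 = s(v, u) then (if b then 1 else 0)
  else if v ∈ e.1 then (if b then 0 else 1)
  else if ∀ x ∈ e.1, x ∈ S then (if b then 0 else 1)
  else 1

noncomputable def T2 (v : Fin n) (S : Finset (Fin n)) (ω : En n → Bool) : ℝ :=
  ∏ e : En n, g v S e (ω e)

lemma h1_nonneg (v : Fin n) (e : En n) (b : Bool) : 0 ≤ h1 v e b := by
  rw [h1]; split_ifs <;> norm_num

lemma g_nonneg (v : Fin n) (S : Finset (Fin n)) (e : En n) (b : Bool) : 0 ≤ g v S e b := by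
  rw [g]; split_ifs <;> cases b <;> norm_num

lemma T1_nonneg (k : ℕ) (v : Fin n) (ω : En n → Bool) : 0 ≤ T1 k v ω := by
  rw [T1]
  exact mul_nonneg (by positivity) (Finset.prod_nonneg fun e _ => h1_nonneg v e (ω e))

lemma T2_nonneg (v : Fin n) (S : Finset (Fin n)) (ω : En n → Bool) : 0 ≤ T2 v S ω :=
  Finset.prod_nonneg fun e _ => g_nonneg v S e (ω e)

lemma one_le_T1 {k : ℕ} {v : Fin n} {ω : En n → Bool}
    (hk : ((graphOf ω).neighborFinset v).card ≤ k) : 1 ≤ T1 k v ω := by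
  rw [T1]
  have hprod : ∏ e : En n, h1 v e (ω e)
      = (1/2 : ℝ) ^ (univ.filter fun e : En n => v ∈ e.1 ∧ ω e = true).card := by
    have : ∀ e : En n, h1 v e (ω e) = if v ∈ e.1 ∧ ω e = true then (1/2 : ℝ) else 1 :=
      fun e => rfl
    rw [Finset.prod_congr rfl fun e _ => this e, Finset.prod_ite, Finset.prod_const,
      Finset.prod_const, one_pow, mul_one]
  rw [hprod, card_filter_adj ω v]
  calc (1:ℝ) = 2^k * (1/2)^k := by rw [← mul_pow]; norm_num
    _ ≤ 2^k * (1/2)^((graphOf ω).neighborFinset v).card := by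
        have := pow_le_pow_of_le_one (by norm_num : (0:ℝ) ≤ 1/2) (by norm_num) hk
        exact mul_le_mul_of_nonneg_left this (by positivity)

lemma T2_eq_one {v : Fin n} {S : Finset (Fin n)} {ω : En n → Bool}
    (hnb : ∀ u, (graphOf ω).Adj v u ↔ u ∈ S)
    (hind : ∀ x ∈ S, ∀ y ∈ S, ¬ (graphOf ω).Adj x y) : T2 v S ω = 1 := by
  rw [T2]
  apply Finset.prod_eq_one
  rintro ⟨e, hd⟩ -
  induction e using Sym2.ind with
  | _ x y =>
    have hxy : x ≠ y := by simpa [Sym2.mk_isDiag_iff] using hd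
    by_cases hc1 : ∃ u ∈ S, ((⟨s(x,y), hd⟩ : En n) : Sym2 (Fin n)) = s(v, u)
    · have hc1' := hc1
      obtain ⟨u, huS, he⟩ := hc1'
      have he' : s(x,y) = s(v,u) := he
      have hadj : (graphOf ω).Adj v u := (hnb u).mpr huS
      have hω : ω ⟨s(x,y), hd⟩ = true := by
        rw [← mem_edgeSet_graphOf]
        show s(x,y) ∈ _
        rw [he']
        exact ((graphOf ω).mem_edgeSet).mpr hadj
      simp only [g, if_pos hc1, hω]
      norm_num
    · by_cases hc2 : v ∈ ((⟨s(x,y), hd⟩ : En n) : Sym2 (Fin n))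
      · have hω : ω ⟨s(x,y), hd⟩ = false := by
          by_contra h
          rw [Bool.not_eq_false] at h
          have hadj : (graphOf ω).Adj x y :=
            ((graphOf ω).mem_edgeSet).mp ((mem_edgeSet_graphOf _ _).mpr h)
          rcases Sym2.mem_iff.mp hc2 with rfl | rfl
          · exact hc1 ⟨y, (hnb y).mp hadj, rfl⟩
          · exact hc1 ⟨x, (hnb x).mp hadj.symm, Sym2.eq_swap⟩
        simp only [g, if_neg hc1, if_pos hc2, hω]
        norm_num
      · by_cases hc3 : ∀ z ∈ ((⟨s(x,y), hd⟩ : En n) : Sym2 (Fin n)), z ∈ S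
        · have hx : x ∈ S := hc3 x (Sym2.mem_mk_left x y)
          have hy : y ∈ S := hc3 y (Sym2.mem_mk_right x y)
          have hω : ω ⟨s(x,y), hd⟩ = false := by
            by_contra h
            rw [Bool.not_eq_false] at h
            exact hind x hx y hy
              (((graphOf ω).mem_edgeSet).mp ((mem_edgeSet_graphOf _ _).mpr h))
          simp only [g, if_neg hc1, if_neg hc2, if_pos hc3, hω]
          norm_num
        · simp only [g, if_neg hc1, if_neg hc2, if_neg hc3]

lemma sum_w_T1 (p : ℝ) (k : ℕ) (v : Fin n) :
    ∑ ω : En n → Bool, w p ω * T1 k v ω = 2^k * (1 - p/2)^(n-1) := by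
  have step : ∀ ω : En n → Bool, w p ω * T1 k v ω
      = 2^k * (w p ω * ∏ e, h1 v e (ω e)) := fun ω => by rw [T1]; ring
  rw [Finset.sum_congr rfl fun ω _ => step ω, ← Finset.mul_sum, sum_w_prod p (h1 v)]
  congr 1
  have hval : ∀ e : En n, p * h1 v e true + (1-p) * h1 v e false
      = if v ∈ e.1 then 1 - p/2 else 1 := by
    intro e
    rw [h1, h1]
    by_cases h : v ∈ e.1 <;> simp [h] <;> ring
  rw [Finset.prod_congr rfl fun e _ => hval e, Finset.prod_ite, Finset.prod_const,
    Finset.prod_const, one_pow, mul_one, card_filter_mem v]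


lemma sum_w_T2 (p : ℝ) {v : Fin n} {S : Finset (Fin n)} (hS : S ⊆ univ.erase v) :
    ∑ ω : En n → Bool, w p ω * T2 v S ω
      = p ^ S.card * ((1-p) ^ ((n-1) - S.card) * (1-p) ^ (S.card.choose 2)) := by
  have hv : v ∉ S := fun h => (Finset.mem_erase.mp (hS h)).1 rfl
  rw [show (fun ω : En n → Bool => w p ω * T2 v S ω)
      = fun ω => w p ω * ∏ e, g v S e (ω e) from rfl, sum_w_prod p (g v S)]
  have hval : ∀ e : En n, p * g v S e true + (1-p) * g v S e false
      = (if ∃ u ∈ S, e.1 = s(v, u) then p else 1)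
        * ((if (¬ ∃ u ∈ S, e.1 = s(v, u)) ∧ v ∈ e.1 then 1-p else 1)
        * (if (¬ ∃ u ∈ S, e.1 = s(v, u)) ∧ v ∉ e.1 ∧ (∀ x ∈ e.1, x ∈ S) then 1-p else 1)) := by
    intro e
    have P1 : Prop := True
    by_cases hc1 : ∃ u ∈ S, e.1 = s(v, u)
    · simp only [g, if_pos hc1,
        if_neg (fun h => h.1 hc1 : ¬((¬∃ u ∈ S, e.1 = s(v,u)) ∧ v ∈ e.1)),
        if_neg (fun h => h.1 hc1 : ¬((¬∃ u ∈ S, e.1 = s(v,u)) ∧ v ∉ e.1 ∧ ∀ x ∈ e.1, x ∈ S))]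
      norm_num
    · by_cases hc2 : v ∈ e.1
      · simp only [g, if_neg hc1, if_pos hc2,
          if_pos (⟨hc1, hc2⟩ : (¬∃ u ∈ S, e.1 = s(v,u)) ∧ v ∈ e.1),
          if_neg (fun h => h.2.1 hc2 :
            ¬((¬∃ u ∈ S, e.1 = s(v,u)) ∧ v ∉ e.1 ∧ ∀ x ∈ e.1, x ∈ S))]
        norm_num
      · by_cases hc3 : ∀ x ∈ e.1, x ∈ S
        · simp only [g, if_neg hc1, if_neg hc2, if_pos hc3,
            if_neg (fun h => hc2 h.2 : ¬((¬∃ u ∈ S, e.1 = s(v,u)) ∧ v ∈ e.1)),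
            if_pos (⟨hc1, hc2, hc3⟩ :
              (¬∃ u ∈ S, e.1 = s(v,u)) ∧ v ∉ e.1 ∧ ∀ x ∈ e.1, x ∈ S)]
          norm_num
        · simp only [g, if_neg hc1, if_neg hc2, if_neg hc3,
            if_neg (fun h => hc2 h.2 : ¬((¬∃ u ∈ S, e.1 = s(v,u)) ∧ v ∈ e.1)),
            if_neg (fun h => hc3 h.2.2 :
              ¬((¬∃ u ∈ S, e.1 = s(v,u)) ∧ v ∉ e.1 ∧ ∀ x ∈ e.1, x ∈ S))]
          norm_num
  rw [Finset.prod_congr rfl fun e _ => hval e, Finset.prod_mul_distrib,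
    Finset.prod_mul_distrib]
  have c1 : (∏ e : En n, if ∃ u ∈ S, e.1 = s(v, u) then p else 1) = p ^ S.card := by
    rw [Finset.prod_ite, Finset.prod_const, Finset.prod_const, one_pow, mul_one]
    congr 1
    rw [card_filter_eq v (· ∈ S) (D2 := fun _ => inferInstance)]
    have : (univ.filter fun u : Fin n => u ≠ v ∧ u ∈ S) = S := by
      ext u
      simp only [mem_filter, mem_univ, true_and]
      exact ⟨fun h => h.2, fun h => ⟨(Finset.mem_erase.mp (hS h)).1, h⟩⟩
    rw [this]
  have c2 : (∏ e : En n, if (¬ ∃ u ∈ S, e.1 = s(v, u)) ∧ v ∈ e.1 then 1-p else 1)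
      = (1-p) ^ ((n-1) - S.card) := by
    rw [Finset.prod_ite, Finset.prod_const, Finset.prod_const, one_pow, mul_one]
    congr 1
    have heq : (univ.filter fun e : En n => (¬ ∃ u ∈ S, e.1 = s(v, u)) ∧ v ∈ e.1)
        = (univ.filter fun e : En n => ∃ u, u ∉ S ∧ e.1 = s(v, u)) := by
      apply filter_congr
      intro e _
      constructor
      · rintro ⟨hne, hv'⟩
        obtain ⟨u, hu⟩ := (mem_iff_exists v e).mp hv'
        exact ⟨u, fun huS => hne ⟨u, huS, hu⟩, hu⟩
      · rintro ⟨u, huS, hu⟩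
        refine ⟨?_, (mem_iff_exists v e).mpr ⟨u, hu⟩⟩
        rintro ⟨u', hu'S, hu'⟩
        rw [hu] at hu'
        exact huS (Sym2.congr_right.mp hu' ▸ hu'S)
    rw [heq, card_filter_eq v (· ∉ S) (D2 := fun _ => inferInstance)]
    have : (univ.filter fun u : Fin n => u ≠ v ∧ u ∉ S) = (univ.erase v) \ S := by
      ext u
      simp only [mem_filter, mem_univ, true_and, Finset.mem_sdiff, Finset.mem_erase]
      tauto
    rw [this, Finset.card_sdiff_of_subset hS, Finset.card_erase_of_mem (mem_univ v),
      Finset.card_univ, Fintype.card_fin]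
  have c3 : (∏ e : En n, if (¬ ∃ u ∈ S, e.1 = s(v, u)) ∧ v ∉ e.1 ∧ (∀ x ∈ e.1, x ∈ S)
      then 1-p else 1) = (1-p) ^ (S.card.choose 2) := by
    rw [Finset.prod_ite, Finset.prod_const, Finset.prod_const, one_pow, mul_one]
    congr 1
    have heq : (univ.filter fun e : En n =>
        (¬ ∃ u ∈ S, e.1 = s(v, u)) ∧ v ∉ e.1 ∧ (∀ x ∈ e.1, x ∈ S))
        = (univ.filter fun e : En n => ∀ x ∈ e.1, x ∈ S) := by
      apply filter_congr
      intro e _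
      constructor
      · rintro ⟨-, -, h⟩; exact h
      · intro h
        have hv' : v ∉ e.1 := fun hve => hv (h v hve)
        refine ⟨?_, hv', h⟩
        rintro ⟨u, -, hu⟩
        exact hv' ((mem_iff_exists v e).mpr ⟨u, hu⟩)
    rw [heq, card_filter_subset S]
  rw [c1, c2, c3]

lemma sum_powerset_eq_one (p : ℝ) (v : Fin n) :
    ∑ S ∈ (univ.erase v).powerset, p ^ S.card * (1-p) ^ ((n-1) - S.card) = 1 := by
  have hone : ∏ _i ∈ univ.erase v, (p + (1 - p)) = 1 := by
    apply Finset.prod_eq_one; intro i _; ring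
  calc ∑ S ∈ (univ.erase v).powerset, p ^ S.card * (1-p) ^ ((n-1) - S.card)
      = ∑ t ∈ (univ.erase v).powerset, (∏ _i ∈ t, p) * ∏ _i ∈ univ.erase v \ t, (1-p) := by
        apply Finset.sum_congr rfl
        intro S hS
        rw [Finset.prod_const, Finset.prod_const,
          Finset.card_sdiff_of_subset (Finset.mem_powerset.mp hS),
          Finset.card_erase_of_mem (mem_univ v), Finset.card_univ, Fintype.card_fin]
    _ = ∏ _i ∈ univ.erase v, (p + (1 - p)) :=
        (Finset.prod_add (fun _ : Fin n => p) (fun _ : Fin n => 1 - p) (univ.erase v)).symm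
    _ = 1 := hone

lemma graphProb_nonneg {p : ℝ} (hp0 : 0 ≤ p) (hp1 : p ≤ 1)
    (A : SimpleGraph (Fin n) → Prop) : 0 ≤ graphProb n p A := by
  rw [graphProb]
  apply Finset.sum_nonneg
  intro G _
  split
  · exact mul_nonneg (pow_nonneg hp0 _) (pow_nonneg (by linarith) _)
  · exact le_refl 0


lemma main_bound (p : ℝ) (hp0 : 0 ≤ p) (hp1 : p ≤ 1) (k : ℕ) :
    graphProb n p (fun G => ∃ v : Fin n,
        ∀ x ∈ G.neighborSet v, ∀ y ∈ G.neighborSet v, ¬ G.Adj x y)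
      ≤ n * ((2:ℝ)^k * (1 - p/2)^(n-1) + (1-p)^((k+1).choose 2)) := by
  have hp' : 0 ≤ 1 - p := by linarith
  rw [graphProb_eq]
  set filt : Fin n → Finset (Finset (Fin n)) :=
    fun v => (univ.erase v).powerset.filter (fun S => k < S.card) with hfilt
  set B : (En n → Bool) → ℝ :=
    fun ω => ∑ v : Fin n, (T1 k v ω + ∑ S ∈ filt v, T2 v S ω) with hB
  have hB0 : ∀ ω, 0 ≤ B ω := by
    intro ω
    apply Finset.sum_nonneg
    intro v _
    exact add_nonneg (T1_nonneg k v ω) (Finset.sum_nonneg fun S _ => T2_nonneg v S ω)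
  have step1 : ∀ ω : En n → Bool,
      (if (∃ v : Fin n, ∀ x ∈ (graphOf ω).neighborSet v,
          ∀ y ∈ (graphOf ω).neighborSet v, ¬ (graphOf ω).Adj x y) then w p ω else 0)
        ≤ w p ω * B ω := by
    intro ω
    by_cases hA : ∃ v : Fin n, ∀ x ∈ (graphOf ω).neighborSet v,
        ∀ y ∈ (graphOf ω).neighborSet v, ¬ (graphOf ω).Adj x y
    · rw [if_pos hA]
      obtain ⟨v, hv⟩ := hA
      set S := (graphOf ω).neighborFinset v with hSdef
      have hSsub : S ⊆ univ.erase v := by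
        intro u hu
        exact Finset.mem_erase.mpr
          ⟨((graphOf ω).mem_neighborFinset v u).mp hu |>.ne', mem_univ u⟩
      have hB1 : 1 ≤ B ω := by
        refine le_trans ?_ (Finset.single_le_sum
          (f := fun v' => T1 k v' ω + ∑ S' ∈ filt v', T2 v' S' ω)
          (fun i _ => add_nonneg (T1_nonneg k i ω)
            (Finset.sum_nonneg fun S' _ => T2_nonneg i S' ω)) (mem_univ v))
        by_cases hk : k < S.card
        · have hT2 : T2 v S ω = 1 := by
            apply T2_eq_one
            · intro u; exact ((graphOf ω).mem_neighborFinset v u).symm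
            · intro x hx y hy
              exact hv x (((graphOf ω).mem_neighborFinset v x).mp hx)
                y (((graphOf ω).mem_neighborFinset v y).mp hy)
          have hmem : S ∈ filt v :=
            Finset.mem_filter.mpr ⟨Finset.mem_powerset.mpr hSsub, hk⟩
          calc (1:ℝ) = T2 v S ω := hT2.symm
            _ ≤ ∑ S' ∈ filt v, T2 v S' ω :=
                Finset.single_le_sum (fun S' _ => T2_nonneg v S' ω) hmem
            _ ≤ _ := le_add_of_nonneg_left (T1_nonneg k v ω)
        · push_neg at hk
          exact le_trans (one_le_T1 hk)
            (le_add_of_nonneg_right (Finset.sum_nonneg fun S' _ => T2_nonneg v S' ω))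
      calc w p ω = w p ω * 1 := (mul_one _).symm
        _ ≤ w p ω * B ω := mul_le_mul_of_nonneg_left hB1 (w_nonneg hp0 hp1 ω)
    · rw [if_neg hA]
      exact mul_nonneg (w_nonneg hp0 hp1 ω) (hB0 ω)
  calc ∑ ω : En n → Bool, (if (∃ v : Fin n, ∀ x ∈ (graphOf ω).neighborSet v,
          ∀ y ∈ (graphOf ω).neighborSet v, ¬ (graphOf ω).Adj x y) then w p ω else 0)
      ≤ ∑ ω : En n → Bool, w p ω * B ω := Finset.sum_le_sum fun ω _ => step1 ω
    _ = ∑ v : Fin n, ((∑ ω : En n → Bool, w p ω * T1 k v ω)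
          + ∑ S ∈ filt v, ∑ ω : En n → Bool, w p ω * T2 v S ω) := by
        have hfun : (fun ω : En n → Bool => w p ω * B ω)
            = fun ω => ∑ v : Fin n, (w p ω * T1 k v ω + ∑ S ∈ filt v, w p ω * T2 v S ω) := by
          funext ω
          rw [hB, Finset.mul_sum]
          exact Finset.sum_congr rfl fun v _ => by rw [mul_add, Finset.mul_sum]
        rw [hfun, Finset.sum_comm]
        apply Finset.sum_congr rfl
        intro v _
        rw [Finset.sum_add_distrib]
        congr 1
        exact Finset.sum_comm
    _ ≤ ∑ _v : Fin n, ((2:ℝ)^k * (1 - p/2)^(n-1) + (1-p)^((k+1).choose 2)) := by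
        apply Finset.sum_le_sum
        intro v _
        rw [sum_w_T1 p k v]
        apply add_le_add_right
        calc ∑ S ∈ filt v, ∑ ω : En n → Bool, w p ω * T2 v S ω
            = ∑ S ∈ filt v, p ^ S.card * ((1-p) ^ ((n-1) - S.card)
                * (1-p) ^ (S.card.choose 2)) := by
              apply Finset.sum_congr rfl
              intro S hS
              exact sum_w_T2 p (Finset.mem_powerset.mp (Finset.mem_filter.mp hS).1)
          _ ≤ ∑ S ∈ filt v, (1-p)^((k+1).choose 2)
                * (p ^ S.card * (1-p) ^ ((n-1) - S.card)) := by
              apply Finset.sum_le_sum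
              intro S hS
              have hk : k + 1 ≤ S.card := (Finset.mem_filter.mp hS).2
              have hch : (k+1).choose 2 ≤ S.card.choose 2 := Nat.choose_le_choose 2 hk
              have hpow : (1-p) ^ (S.card.choose 2) ≤ (1-p)^((k+1).choose 2) :=
                pow_le_pow_of_le_one hp' (by linarith) hch
              calc p ^ S.card * ((1-p) ^ ((n-1) - S.card) * (1-p) ^ (S.card.choose 2))
                  ≤ p ^ S.card * ((1-p) ^ ((n-1) - S.card) * (1-p)^((k+1).choose 2)) := by
                    apply mul_le_mul_of_nonneg_left _ (pow_nonneg hp0 _)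
                    exact mul_le_mul_of_nonneg_left hpow (pow_nonneg hp' _)
                _ = (1-p)^((k+1).choose 2) * (p ^ S.card * (1-p) ^ ((n-1) - S.card)) := by
                    ring
          _ ≤ (1-p)^((k+1).choose 2) * ∑ S ∈ (univ.erase v).powerset,
                p ^ S.card * (1-p) ^ ((n-1) - S.card) := by
              rw [← Finset.mul_sum]
              apply mul_le_mul_of_nonneg_left _ (pow_nonneg hp' _)
              apply Finset.sum_le_sum_of_subset_of_nonneg (Finset.filter_subset _ _)
              intro S _ _
              exact mul_nonneg (pow_nonneg hp0 _) (pow_nonneg hp' _)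
          _ = (1-p)^((k+1).choose 2) := by
              rw [sum_powerset_eq_one p v, mul_one]
    _ = n * ((2:ℝ)^k * (1 - p/2)^(n-1) + (1-p)^((k+1).choose 2)) := by
        rw [Finset.sum_const, Finset.card_univ, Fintype.card_fin, nsmul_eq_mul]

end AuxER

/-- For `0 < α < 2/3` and `p = n^{-α}`, a.a.s. no vertex of `G(n,p)` has an
independent neighborhood. -/
theorem aas_no_independent_neighborhood (α : ℝ) (h0 : 0 < α) (h1 : α < 2 / 3) :
    Tendsto (fun n : ℕ => graphProb n ((n : ℝ) ^ (-α)) (fun G =>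
        ∃ v : Fin n, ∀ x ∈ G.neighborSet v, ∀ y ∈ G.neighborSet v, ¬ G.Adj x y))
      atTop (nhds 0) := by
  have hα1 : α < 1 := lt_trans h1 (by norm_num)
  set δ : ℝ := min (1 - α) (2 - 3*α) with hδdef
  have hδ : 0 < δ := lt_min (by linarith) (by linarith)
  have hδ1a : δ ≤ 1 - α := min_le_left _ _
  have hδ2a : δ ≤ 2 - 3*α := min_le_right _ _
  have hg : Tendsto (fun n : ℕ => 2 * ((n:ℝ) * Real.exp (-(1/512) * (n:ℝ)^δ)))
      atTop (nhds 0) := by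
    have base := tendsto_rpow_mul_exp_neg_mul_atTop_nhds_zero (1/δ) (1/512) (by norm_num)
    have comp : Tendsto (fun n : ℕ => (n:ℝ)^δ) atTop atTop :=
      (tendsto_rpow_atTop hδ).comp tendsto_natCast_atTop_atTop
    have tot := base.comp comp
    have heq : (fun n : ℕ => ((n:ℝ)^δ)^(1/δ) * Real.exp (-(1/512) * (n:ℝ)^δ))
        =ᶠ[atTop] fun n : ℕ => (n:ℝ) * Real.exp (-(1/512) * (n:ℝ)^δ) := by
      filter_upwards with n
      have hn0 : (0:ℝ) ≤ (n:ℝ) := Nat.cast_nonneg n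
      rw [← Real.rpow_mul hn0, mul_one_div_cancel hδ.ne', Real.rpow_one]
    have tot2 := Tendsto.congr' heq (by exact tot)
    simpa using tot2.const_mul (2:ℝ)
  refine squeeze_zero' ?_ ?_ hg
  · filter_upwards [eventually_ge_atTop 1] with n hn
    have hn1 : (1:ℝ) ≤ (n:ℝ) := by exact_mod_cast hn
    exact AuxER.graphProb_nonneg (Real.rpow_nonneg (by linarith) _)
      (Real.rpow_le_one_of_one_le_of_nonpos hn1 (by linarith)) _
  · have hev1 : ∀ᶠ n : ℕ in atTop, (16:ℝ) ≤ (n:ℝ)^(1-α) :=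
      (((tendsto_rpow_atTop (by linarith : (0:ℝ) < 1 - α)).comp
        tendsto_natCast_atTop_atTop).eventually_ge_atTop 16)
    filter_upwards [hev1, eventually_ge_atTop 2] with n hn16 hn2
    have hx2 : (2:ℝ) ≤ (n:ℝ) := by exact_mod_cast hn2
    have hx0 : (0:ℝ) < (n:ℝ) := by linarith
    have hx1 : (1:ℝ) ≤ (n:ℝ) := by linarith
    set x : ℝ := (n:ℝ) with hxdef
    set p : ℝ := x ^ (-α) with hpdef
    have hppos : 0 < p := Real.rpow_pos_of_pos hx0 _
    have hp0 : 0 ≤ p := hppos.le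
    have hp1 : p ≤ 1 := Real.rpow_le_one_of_one_le_of_nonpos hx1 (by linarith)
    set k : ℕ := ⌊x^(1-α)/8⌋₊ with hkdef
    refine le_trans (AuxER.main_bound p hp0 hp1 k) ?_
    set E : ℝ := Real.exp (-(1/512) * x^δ) with hEdef
    have hy0 : (0:ℝ) ≤ x^(1-α) := Real.rpow_nonneg hx0.le _
    have hxd0 : (0:ℝ) ≤ x^δ := Real.rpow_nonneg hx0.le _
    have hxd : x^δ ≤ x^(1-α) := Real.rpow_le_rpow_of_exponent_le hx1 hδ1a
    have hxd2 : x^δ ≤ x^(2-3*α) := Real.rpow_le_rpow_of_exponent_le hx1 hδ2a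
    have hk_ub : (k:ℝ) ≤ x^(1-α)/8 := Nat.floor_le (by linarith)
    have hk_lb : x^(1-α)/16 ≤ (k:ℝ) := by
      have := Nat.lt_floor_add_one (x^(1-α)/8)
      rw [← hkdef] at this
      linarith
    have hxp : x * p = x^(1-α) := by
      rw [hpdef]
      nth_rewrite 1 [← Real.rpow_one x]
      rw [← Real.rpow_add hx0]
      congr 1 <;> ring
    clear_value x p k E
    -- term 1
    have ha : (2:ℝ)^k * (1 - p/2)^(n-1) ≤ E := by
      have e1 : (2:ℝ)^k = Real.exp ((k:ℝ) * Real.log 2) := by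
        rw [Real.exp_nat_mul, Real.exp_log (by norm_num : (0:ℝ) < 2)]
      have e2 : (1 - p/2)^(n-1) ≤ Real.exp (-((n-1 : ℕ):ℝ) * (p/2)) := by
        have hstep : 1 - p/2 ≤ Real.exp (-(p/2)) := by
          have := Real.add_one_le_exp (-(p/2)); linarith
        calc (1 - p/2)^(n-1) ≤ (Real.exp (-(p/2)))^(n-1) :=
              pow_le_pow_left₀ (by linarith) hstep _
          _ = Real.exp (-((n-1 : ℕ):ℝ) * (p/2)) := by
              rw [← Real.exp_nat_mul]
              ring_nf
      calc (2:ℝ)^k * (1 - p/2)^(n-1)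
          ≤ Real.exp ((k:ℝ) * Real.log 2) * Real.exp (-((n-1 : ℕ):ℝ) * (p/2)) := by
            rw [e1]
            exact mul_le_mul_of_nonneg_left e2 (Real.exp_pos _).le
        _ = Real.exp ((k:ℝ) * Real.log 2 - ((n-1 : ℕ):ℝ) * (p/2)) := by
            rw [← Real.exp_add]; ring_nf
        _ ≤ E := by
            rw [hEdef]
            apply Real.exp_le_exp.mpr
            have hlog2 : Real.log 2 ≤ 1 := by
              have := Real.log_le_sub_one_of_pos (by norm_num : (0:ℝ) < 2)
              linarith
            have hlog2' : 0 ≤ Real.log 2 := Real.log_nonneg (by norm_num)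
            have hk1 : (k:ℝ) * Real.log 2 ≤ x^(1-α)/8 := by
              calc (k:ℝ) * Real.log 2 ≤ (k:ℝ) * 1 :=
                    mul_le_mul_of_nonneg_left hlog2 (Nat.cast_nonneg k)
                _ = (k:ℝ) := mul_one _
                _ ≤ x^(1-α)/8 := hk_ub
            have hcast : ((n-1 : ℕ):ℝ) = x - 1 := by
              rw [Nat.cast_sub (by omega), Nat.cast_one, ← hxdef]
            have hk2 : x^(1-α)/4 ≤ ((n-1 : ℕ):ℝ) * (p/2) := by
              rw [hcast]
              have hx1p : x/2 ≤ x - 1 := by linarith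
              calc x^(1-α)/4 = (x/2) * (p/2) * 2 / 2 := by rw [← hxp]; ring
                _ = (x/2) * (p/2) := by ring
                _ ≤ (x - 1) * (p/2) := by
                    apply mul_le_mul_of_nonneg_right hx1p (by linarith)
            linarith
    -- term 2
    have hb : (1-p)^((k+1).choose 2) ≤ E := by
      have hC : ((k+1).choose 2 : ℝ) ≥ (k:ℝ)^2/2 := by
        have hdvd : 2 ∣ (k+1) * k := by
          rcases Nat.even_mul_succ_self k with ⟨m, hm⟩
          exact ⟨m, by rw [mul_comm, hm, two_mul]⟩
        have h2C : 2 * ((k+1).choose 2) = (k+1) * k := by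
          rw [Nat.choose_two_right, Nat.add_sub_cancel, Nat.mul_div_cancel' hdvd]
        have := congrArg (fun m : ℕ => (m:ℝ)) h2C
        push_cast at this
        nlinarith [sq_nonneg ((k:ℝ))]
      have e2 : (1-p)^((k+1).choose 2) ≤ Real.exp (-(((k+1).choose 2 : ℝ) * p)) := by
        have hstep : 1 - p ≤ Real.exp (-p) := by
          have := Real.add_one_le_exp (-p); linarith
        calc (1-p)^((k+1).choose 2) ≤ (Real.exp (-p))^((k+1).choose 2) :=
              pow_le_pow_left₀ (by linarith) hstep _
          _ = Real.exp (-(((k+1).choose 2 : ℝ) * p)) := by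
              rw [← Real.exp_nat_mul]; ring_nf
      refine le_trans e2 ?_
      rw [hEdef]
      apply Real.exp_le_exp.mpr
      have hkey : x^δ/512 ≤ ((k+1).choose 2 : ℝ) * p := by
        have hkk : (k:ℝ)^2 ≥ (x^(1-α))^2/256 := by nlinarith [hk_lb, hy0]
        have hyx : (x^(1-α))^2 * p = x^(2-3*α) := by
          rw [sq, hpdef, ← Real.rpow_add hx0, ← Real.rpow_add hx0]
          congr 1 <;> ring
        have : ((k+1).choose 2 : ℝ) * p ≥ ((k:ℝ)^2/2) * p :=
          mul_le_mul_of_nonneg_right hC hp0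
        have h512 : ((k:ℝ)^2/2) * p ≥ x^(2-3*α)/512 := by
          rw [← hyx]
          have hm := mul_le_mul_of_nonneg_right hkk hppos.le
          linarith
        calc x^δ/512 ≤ x^(2-3*α)/512 := by linarith
          _ ≤ ((k:ℝ)^2/2) * p := h512
          _ ≤ ((k+1).choose 2 : ℝ) * p := this
      linarith
    -- combine
    have hterm : (2:ℝ)^k * (1 - p/2)^(n-1) + (1-p)^((k+1).choose 2) ≤ 2 * E := by
      linarith
    rw [← hxdef]
    calc x * ((2:ℝ)^k * (1 - p/2)^(n-1) + (1-p)^((k+1).choose 2))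
        ≤ x * (2 * E) := mul_le_mul_of_nonneg_left hterm (by linarith)
      _ = 2 * (x * E) := by ring
end

section
/- Let 2/3 ≤ α < 1 and p = n^{-α}. Then a.a.s. there exists a vertex v in G(n,p) whose neighborhood N(v) is an independent set. -/
open Filter

set_option maxHeartbeats 1000000

namespace AASProof
open Finset
open Classical

variable {n : ℕ}



noncomputable def M (n : ℕ) : Finset (Sym2 (Fin n)) := univ.filter (fun e => ¬ e.IsDiag)

noncomputable def wt (n : ℕ) (p : ℝ) (t : Finset (Sym2 (Fin n))) : ℝ :=
  p ^ t.card * (1 - p) ^ (n.choose 2 - t.card)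

lemma card_M : (M n).card = n.choose 2 := by
  have h := Sym2.card_subtype_not_diag (α := Fin n)
  rw [Fintype.card_subtype] at h
  simpa [M] using h

lemma wt_nonneg {p : ℝ} (hp0 : 0 ≤ p) (hp1 : p ≤ 1) (t : Finset (Sym2 (Fin n))) :
    0 ≤ wt n p t :=
  mul_nonneg (pow_nonneg hp0 _) (pow_nonneg (by linarith) _)

lemma sum_powerset_binom {β : Type*} [DecidableEq β] (s : Finset β) (p : ℝ) :
    ∑ t ∈ s.powerset, p ^ t.card * (1 - p) ^ (s.card - t.card) = 1 := by
  have h := Finset.prod_add (fun _ : β => p) (fun _ : β => 1 - p) s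
  simp only [add_sub_cancel, prod_const, one_pow] at h
  have h2 : ∑ t ∈ s.powerset, p ^ t.card * (1 - p) ^ (s.card - t.card)
      = ∑ t ∈ s.powerset, p ^ t.card * (1 - p) ^ (s \ t).card := by
    apply Finset.sum_congr rfl
    intro t ht
    rw [Finset.mem_powerset] at ht
    rw [card_sdiff_of_subset ht]
  rw [h2, ← h]

lemma sum_powerset_wt (p : ℝ) : ∑ t ∈ (M n).powerset, wt n p t = 1 := by
  have := sum_powerset_binom (M n) p
  rw [card_M] at this
  simpa [wt] using this

lemma sum_wt_cond (p : ℝ) {s : Finset (Sym2 (Fin n))} (hs : s ⊆ M n) :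
    ∑ t ∈ (M n).powerset, (if s ⊆ t then wt n p t else 0) = p ^ s.card := by
  classical
  rw [Finset.sum_ite, Finset.sum_const_zero, add_zero]
  have hbij : ∑ t ∈ (M n).powerset.filter (fun t => s ⊆ t), wt n p t
      = ∑ u ∈ ((M n) \ s).powerset, wt n p (u ∪ s) := by
    apply Finset.sum_nbij' (fun t => t \ s) (fun u => u ∪ s)
    · intro t ht
      simp only [mem_filter, mem_powerset] at ht
      rw [mem_powerset]
      exact sdiff_subset_sdiff ht.1 subset_rfl
    · intro u hu
      rw [mem_powerset] at hu
      simp only [mem_filter, mem_powerset]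
      exact ⟨union_subset (hu.trans sdiff_subset) hs, subset_union_right⟩
    · intro t ht
      simp only [mem_filter, mem_powerset] at ht
      rw [sdiff_union_of_subset ht.2]
    · intro u hu
      rw [mem_powerset] at hu
      rw [union_sdiff_right, Finset.sdiff_eq_self_of_disjoint]
      exact Finset.disjoint_of_subset_left hu sdiff_disjoint
    · intro t ht
      simp only [mem_filter, mem_powerset] at ht
      rw [sdiff_union_of_subset ht.2]
  rw [hbij]
  have hcard : ∀ u ∈ ((M n) \ s).powerset, wt n p (u ∪ s)
      = p ^ s.card * (p ^ u.card * (1 - p) ^ (((M n) \ s).card - u.card)) := by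
    intro u hu
    rw [mem_powerset] at hu
    have hdisj : Disjoint u s := Finset.disjoint_of_subset_left hu sdiff_disjoint
    have hcu : (u ∪ s).card = u.card + s.card := card_union_of_disjoint hdisj
    have hsub : s ⊆ M n := hs
    have h1 : ((M n) \ s).card = (M n).card - s.card := card_sdiff_of_subset hs
    have h2 : n.choose 2 - (u.card + s.card) = ((M n) \ s).card - u.card := by
      rw [h1, ← card_M]
      have : u.card ≤ (M n).card - s.card := by
        rw [← h1]; exact card_le_card hu
      omega
    rw [wt, hcu, h2, pow_add]
    ring
  rw [Finset.sum_congr rfl hcard, ← Finset.mul_sum, sum_powerset_binom, mul_one]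



noncomputable def Gof (t : Finset (Sym2 (Fin n))) : SimpleGraph (Fin n) :=
  SimpleGraph.fromEdgeSet ↑t

lemma edgeFinset_Gof {t : Finset (Sym2 (Fin n))} (ht : t ∈ (M n).powerset) :
    (Gof t).edgeFinset = t := by
  rw [mem_powerset] at ht
  ext e
  rw [SimpleGraph.mem_edgeFinset, Gof, SimpleGraph.edgeSet_fromEdgeSet]
  simp only [Set.mem_diff, Set.mem_setOf_eq, Finset.mem_coe]
  refine ⟨fun h => h.1, fun h => ⟨h, by have := ht h; simpa [M] using this⟩⟩

lemma Gof_edgeFinset (G : SimpleGraph (Fin n)) : Gof G.edgeFinset = G := by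
  rw [Gof, SimpleGraph.coe_edgeFinset, SimpleGraph.fromEdgeSet_edgeSet]

lemma sum_graph (F : SimpleGraph (Fin n) → ℝ) :
    ∑ G : SimpleGraph (Fin n), F G = ∑ t ∈ (M n).powerset, F (Gof t) := by
  apply Finset.sum_nbij' (fun G => G.edgeFinset) Gof
  · intro G _
    rw [mem_powerset]
    intro e he
    simp only [M, mem_filter, mem_univ, true_and]
    exact G.not_isDiag_of_mem_edgeFinset he
  · intro t _; exact mem_univ _
  · intro G _; exact Gof_edgeFinset G
  · intro t ht; exact edgeFinset_Gof ht
  · intro G _; rw [Gof_edgeFinset]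

lemma natcard_edgeSet (G : SimpleGraph (Fin n)) :
    Nat.card G.edgeSet = G.edgeFinset.card := by
  rw [Nat.card_eq_fintype_card, SimpleGraph.edgeFinset, Set.toFinset_card]

lemma graphProb_eq (p : ℝ) (A : SimpleGraph (Fin n) → Prop) :
    graphProb n p A = ∑ t ∈ (M n).powerset, (if A (Gof t) then wt n p t else 0) := by
  rw [graphProb]
  simp only [natcard_edgeSet]
  rw [sum_graph (fun G => if A G then p ^ G.edgeFinset.card
      * (1 - p) ^ (n.choose 2 - G.edgeFinset.card) else 0)]
  apply Finset.sum_congr rfl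
  intro t ht
  rw [edgeFinset_Gof ht, wt]



noncomputable def S3 (n : ℕ) : Finset (Fin n × Fin n × Fin n) :=
  univ.filter (fun t => t.1 < t.2.1 ∧ t.2.1 < t.2.2)

noncomputable def edg (t : Fin n × Fin n × Fin n) : Finset (Sym2 (Fin n)) :=
  {s(t.1, t.2.1), s(t.1, t.2.2), s(t.2.1, t.2.2)}

noncomputable def vset (t : Fin n × Fin n × Fin n) : Finset (Fin n) :=
  {t.1, t.2.1, t.2.2}

lemma mem_S3 {t : Fin n × Fin n × Fin n} : t ∈ S3 n ↔ t.1 < t.2.1 ∧ t.2.1 < t.2.2 := by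
  simp [S3]

lemma mem_vset {x : Fin n} {t : Fin n × Fin n × Fin n} :
    x ∈ vset t ↔ x = t.1 ∨ x = t.2.1 ∨ x = t.2.2 := by simp [vset]

lemma card_vset_le (t : Fin n × Fin n × Fin n) : (vset t).card ≤ 3 := by
  have h1 := card_insert_le t.1 ({t.2.1, t.2.2} : Finset (Fin n))
  have h2 := card_insert_le t.2.1 ({t.2.2} : Finset (Fin n))
  rw [vset]
  simp only [card_singleton] at *
  omega

lemma card_vset {t : Fin n × Fin n × Fin n} (ht : t ∈ S3 n) : (vset t).card = 3 := by
  rw [mem_S3] at ht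
  have h12 : t.1 ≠ t.2.1 := ht.1.ne
  have h13 : t.1 ≠ t.2.2 := (ht.1.trans ht.2).ne
  have h23 : t.2.1 ≠ t.2.2 := ht.2.ne
  have e1 : t.2.1 ∉ ({t.2.2} : Finset (Fin n)) := by simp [h23]
  have e2 : t.1 ∉ ({t.2.1, t.2.2} : Finset (Fin n)) := by simp [h12, h13]
  rw [vset, card_insert_of_notMem e2, card_insert_of_notMem e1, card_singleton]

lemma card_edg {t : Fin n × Fin n × Fin n} (ht : t ∈ S3 n) : (edg t).card = 3 := by
  rw [mem_S3] at ht
  obtain ⟨u, v, w⟩ := t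
  simp only at ht
  have h12 : u ≠ v := ht.1.ne
  have h13 : u ≠ w := (ht.1.trans ht.2).ne
  have h23 : v ≠ w := ht.2.ne
  have e1 : s(u, w) ∉ ({s(v, w)} : Finset (Sym2 (Fin n))) := by
    intro hmem
    simp only [mem_singleton, Sym2.eq_iff] at hmem
    tauto
  have e2 : s(u, v) ∉ ({s(u, w), s(v, w)} : Finset (Sym2 (Fin n))) := by
    intro hmem
    simp only [mem_insert, mem_singleton, Sym2.eq_iff] at hmem
    tauto
  rw [edg, card_insert_of_notMem e2, card_insert_of_notMem e1, card_singleton]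

lemma mem_vset_of_mem_edg {e : Sym2 (Fin n)} {t : Fin n × Fin n × Fin n} (he : e ∈ edg t)
    {x : Fin n} (hx : x ∈ e) : x ∈ vset t := by
  obtain ⟨u, v, w⟩ := t
  rw [edg, mem_insert, mem_insert, mem_singleton] at he
  rcases he with h | h | h <;> subst h <;> rw [Sym2.mem_iff] at hx <;>
    rw [mem_vset] <;> tauto

lemma sorted_eq {a b : Fin n × Fin n × Fin n} (ha : a ∈ S3 n) (hb : b ∈ S3 n)
    (h : vset a = vset b) : a = b := by
  rw [mem_S3] at ha hb
  have m1 : b.1 = a.1 ∨ b.1 = a.2.1 ∨ b.1 = a.2.2 := by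
    have : b.1 ∈ vset a := by rw [h, mem_vset]; exact Or.inl rfl
    rwa [mem_vset] at this
  have m2 : b.2.1 = a.1 ∨ b.2.1 = a.2.1 ∨ b.2.1 = a.2.2 := by
    have : b.2.1 ∈ vset a := by rw [h, mem_vset]; exact Or.inr (Or.inl rfl)
    rwa [mem_vset] at this
  have m3 : b.2.2 = a.1 ∨ b.2.2 = a.2.1 ∨ b.2.2 = a.2.2 := by
    have : b.2.2 ∈ vset a := by rw [h, mem_vset]; exact Or.inr (Or.inr rfl)
    rwa [mem_vset] at this
  have m4 : a.1 = b.1 ∨ a.1 = b.2.1 ∨ a.1 = b.2.2 := by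
    have : a.1 ∈ vset b := by rw [← h, mem_vset]; exact Or.inl rfl
    rwa [mem_vset] at this
  have V : ∀ x y : Fin n, x = y → x.val = y.val := fun x y hxy => by rw [hxy]
  have M1 := m1.imp (V _ _) (fun h' => h'.imp (V _ _) (V _ _))
  have M2 := m2.imp (V _ _) (fun h' => h'.imp (V _ _) (V _ _))
  have M3 := m3.imp (V _ _) (fun h' => h'.imp (V _ _) (V _ _))
  have M4 := m4.imp (V _ _) (fun h' => h'.imp (V _ _) (V _ _))
  have o1 : a.1.val < a.2.1.val := ha.1
  have o2 : a.2.1.val < a.2.2.val := ha.2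
  have o3 : b.1.val < b.2.1.val := hb.1
  have o4 : b.2.1.val < b.2.2.val := hb.2
  have q : a.1.val = b.1.val ∧ a.2.1.val = b.2.1.val ∧ a.2.2.val = b.2.2.val := by omega
  exact Prod.ext (Fin.ext q.1) (Prod.ext (Fin.ext q.2.1) (Fin.ext q.2.2))

lemma two_edges_cover {t : Fin n × Fin n × Fin n} {e1 e2 : Sym2 (Fin n)}
    (h1 : e1 ∈ edg t) (h2 : e2 ∈ edg t) (hne : e1 ≠ e2) :
    ∀ x ∈ vset t, x ∈ e1 ∨ x ∈ e2 := by
  intro x hx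
  obtain ⟨u, v, w⟩ := t
  rw [mem_vset] at hx
  simp only at hx
  rw [edg, mem_insert, mem_insert, mem_singleton] at h1 h2
  rcases h1 with h | h | h <;> subst h <;> rcases h2 with h | h | h <;> subst h <;>
    first
    | exact absurd rfl hne
    | (rcases hx with h | h | h <;> subst h <;> simp [Sym2.mem_iff])

lemma inter_card_le_one {a b : Fin n × Fin n × Fin n} (ha : a ∈ S3 n) (hb : b ∈ S3 n)
    (hab : a ≠ b) : (edg a ∩ edg b).card ≤ 1 := by
  by_contra hcon
  push_neg at hcon
  obtain ⟨e1, he1, e2, he2, hne⟩ := Finset.one_lt_card.mp hcon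
  rw [mem_inter] at he1 he2
  have hsub : vset a ⊆ vset b := by
    intro x hx
    rcases two_edges_cover he1.1 he2.1 hne x hx with h | h
    · exact mem_vset_of_mem_edg he1.2 h
    · exact mem_vset_of_mem_edg he2.2 h
  have heq : vset a = vset b :=
    Finset.eq_of_subset_of_card_le hsub (by rw [card_vset ha, card_vset hb])
  exact hab (sorted_eq ha hb heq)

lemma card_union_ge5 {a b : Fin n × Fin n × Fin n} (ha : a ∈ S3 n) (hb : b ∈ S3 n)
    (hab : a ≠ b) : 5 ≤ (edg a ∪ edg b).card := by
  have h := Finset.card_union_add_card_inter (edg a) (edg b)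
  have h1 := inter_card_le_one ha hb hab
  rw [card_edg ha, card_edg hb] at h
  omega

lemma card_union_le6 (a b : Fin n × Fin n × Fin n) : (edg a ∪ edg b).card ≤ 6 := by
  apply (Finset.card_union_le _ _).trans
  have h1 : (edg a).card ≤ 3 := by
    apply (card_insert_le _ _).trans
    have := card_insert_le s(a.1, a.2.2) ({s(a.2.1, a.2.2)} : Finset (Sym2 (Fin n)))
    simp only [card_singleton] at this ⊢
    omega
  have h2 : (edg b).card ≤ 3 := by
    apply (card_insert_le _ _).trans
    have := card_insert_le s(b.1, b.2.2) ({s(b.2.1, b.2.2)} : Finset (Sym2 (Fin n)))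
    simp only [card_singleton] at this ⊢
    omega
  omega

lemma card_union_eq6 {a b : Fin n × Fin n × Fin n} (ha : a ∈ S3 n) (hb : b ∈ S3 n)
    (hdisj : Disjoint (edg a) (edg b)) : (edg a ∪ edg b).card = 6 := by
  rw [card_union_of_disjoint hdisj, card_edg ha, card_edg hb]

lemma sort3 {a b c : Fin n} (hab : a ≠ b) (hac : a ≠ c) (hbc : b ≠ c) :
    ∃ t ∈ S3 n, vset t = {a, b, c} := by
  have vs : ∀ u v w : Fin n, vset (u, v, w) = {u, v, w} := fun _ _ _ => rfl
  rcases lt_or_gt_of_ne hab with h1 | h1 <;> rcases lt_or_gt_of_ne hac with h2 | h2 <;>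
    rcases lt_or_gt_of_ne hbc with h3 | h3
  · exact ⟨(a, b, c), mem_S3.mpr ⟨h1, h3⟩, rfl⟩
  · exact ⟨(a, c, b), mem_S3.mpr ⟨h2, h3⟩, by rw [vs]; ext x; simp; tauto⟩
  · exact absurd (h3.trans (h2.trans h1)) (lt_irrefl b)
  · exact ⟨(c, a, b), mem_S3.mpr ⟨h2, h1⟩, by rw [vs]; ext x; simp; tauto⟩
  · exact ⟨(b, a, c), mem_S3.mpr ⟨h1, h2⟩, by rw [vs]; ext x; simp; tauto⟩
  · exact absurd (h2.trans (h3.trans h1)) (lt_irrefl a)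
  · exact ⟨(b, c, a), mem_S3.mpr ⟨h3, h2⟩, by rw [vs]; ext x; simp; tauto⟩
  · exact ⟨(c, b, a), mem_S3.mpr ⟨h3, h1⟩, by rw [vs]; ext x; simp; tauto⟩

lemma card_S3 : (S3 n).card = n.choose 3 := by
  have := Finset.card_powersetCard 3 (univ : Finset (Fin n))
  rw [card_univ, Fintype.card_fin] at this
  rw [← this]
  apply Finset.card_bij (fun t _ => vset t)
  · intro t ht
    rw [Finset.mem_powersetCard]
    exact ⟨subset_univ _, card_vset ht⟩
  · intro t1 h1 t2 h2 heq
    exact sorted_eq h1 h2 heq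
  · intro s hs
    rw [Finset.mem_powersetCard] at hs
    obtain ⟨x, y, z, hxy, hxz, hyz, rfl⟩ := Finset.card_eq_three.mp hs.2
    obtain ⟨t, ht, hv⟩ := sort3 hxy hxz hyz
    exact ⟨t, ht, hv⟩

lemma six_mul_choose3_le : 6 * n.choose 3 ≤ n ^ 3 := by
  have h1 : n.descFactorial 3 = 6 * n.choose 3 := by
    rw [Nat.descFactorial_eq_factorial_mul_choose]
    norm_num [Nat.factorial]
  have h2 : n.descFactorial 3 ≤ n ^ 3 := Nat.descFactorial_le_pow n 3
  omega

lemma card_S3_le : (S3 n).card ≤ n ^ 3 := by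
  rw [card_S3]
  have := six_mul_choose3_le (n := n)
  omega


lemma edg_subset_M {t : Fin n × Fin n × Fin n} (ht : t ∈ S3 n) : edg t ⊆ M n := by
  rw [mem_S3] at ht
  intro e he
  rw [M, mem_filter]
  refine ⟨mem_univ _, ?_⟩
  rw [edg, mem_insert, mem_insert, mem_singleton] at he
  rcases he with h | h | h <;> subst h <;> rw [Sym2.mk_isDiag_iff]
  exacts [ht.1.ne, (ht.1.trans ht.2).ne, ht.2.ne]

/-- Triangle count of an edge set. -/
noncomputable def TC (n : ℕ) (t : Finset (Sym2 (Fin n))) : ℕ :=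
  ((S3 n).filter (fun a => edg a ⊆ t)).card

lemma TC_cast (t : Finset (Sym2 (Fin n))) :
    (TC n t : ℝ) = ∑ a ∈ S3 n, (if edg a ⊆ t then (1 : ℝ) else 0) := by
  rw [TC, Finset.sum_ite, Finset.sum_const_zero, add_zero, Finset.sum_const]
  simp

lemma ET (p : ℝ) :
    ∑ t ∈ (M n).powerset, wt n p t * (TC n t : ℝ) = (S3 n).card * p ^ 3 := by
  have h : ∀ t ∈ (M n).powerset, wt n p t * (TC n t : ℝ)
      = ∑ a ∈ S3 n, (if edg a ⊆ t then wt n p t else 0) := by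
    intro t _
    rw [TC_cast, Finset.mul_sum]
    exact Finset.sum_congr rfl (fun a _ => by rw [mul_ite, mul_one, mul_zero])
  rw [Finset.sum_congr rfl h, Finset.sum_comm]
  have h2 : ∀ a ∈ S3 n, ∑ t ∈ (M n).powerset, (if edg a ⊆ t then wt n p t else 0)
      = p ^ 3 := by
    intro a ha
    rw [sum_wt_cond p (edg_subset_M ha), card_edg ha]
  rw [Finset.sum_congr rfl h2, Finset.sum_const, nsmul_eq_mul]

lemma ET2 (p : ℝ) :
    ∑ t ∈ (M n).powerset, wt n p t * (TC n t : ℝ) ^ 2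
      = ∑ q ∈ S3 n ×ˢ S3 n, p ^ (edg q.1 ∪ edg q.2).card := by
  have h : ∀ t ∈ (M n).powerset, wt n p t * (TC n t : ℝ) ^ 2
      = ∑ q ∈ S3 n ×ˢ S3 n, (if edg q.1 ∪ edg q.2 ⊆ t then wt n p t else 0) := by
    intro t _
    rw [sq, TC_cast, Finset.sum_mul_sum, ← Finset.sum_product', Finset.mul_sum]
    apply Finset.sum_congr rfl
    intro q _
    have : (if edg q.1 ⊆ t then (1:ℝ) else 0) * (if edg q.2 ⊆ t then (1:ℝ) else 0)
        = (if edg q.1 ∪ edg q.2 ⊆ t then (1:ℝ) else 0) := by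
      rw [ite_zero_mul_ite_zero, one_mul]
      congr 1
      simp [Finset.union_subset_iff]
    rw [this, mul_ite, mul_one, mul_zero]
  rw [Finset.sum_congr rfl h, Finset.sum_comm]
  apply Finset.sum_congr rfl
  intro q hq
  rw [Finset.mem_product] at hq
  rw [sum_wt_cond p (Finset.union_subset (edg_subset_M hq.1) (edg_subset_M hq.2))]

lemma card_bad_le :
    (((S3 n ×ˢ S3 n).filter (fun q => ¬ q.1 = q.2)).filter
        (fun q => ¬ Disjoint (edg q.1) (edg q.2))).card ≤ 27 * n ^ 4 := by
  set NB : (Fin n × Fin n × Fin n) → Finset (Fin n × Fin n × Fin n) := fun a =>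
    (vset a ×ˢ (vset a ×ˢ univ)) ∪ (vset a ×ˢ (univ ×ˢ vset a))
      ∪ (univ ×ˢ (vset a ×ˢ vset a)) with hNB
  have hsub : (((S3 n ×ˢ S3 n).filter (fun q => ¬ q.1 = q.2)).filter
        (fun q => ¬ Disjoint (edg q.1) (edg q.2)))
      ⊆ (S3 n).biUnion (fun a => {a} ×ˢ NB a) := by
    intro q hq
    rw [mem_filter, mem_filter, Finset.mem_product] at hq
    obtain ⟨⟨⟨ha, hb⟩, _⟩, hnd⟩ := hq
    obtain ⟨e, he1, he2⟩ := Finset.not_disjoint_iff.mp hnd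
    rw [Finset.mem_biUnion]
    refine ⟨q.1, ha, ?_⟩
    rw [Finset.mem_product, Finset.mem_singleton]
    refine ⟨rfl, ?_⟩
    have hv : ∀ x ∈ e, x ∈ vset q.1 := fun x hx => mem_vset_of_mem_edg he1 hx
    rw [edg, mem_insert, mem_insert, mem_singleton] at he2
    rw [hNB]
    simp only [Finset.mem_union, Finset.mem_product, Finset.mem_singleton, mem_univ,
      and_true, true_and]
    rcases he2 with h | h | h
    · exact Or.inl (Or.inl ⟨hv _ (h ▸ Sym2.mem_mk_left _ _), hv _ (h ▸ Sym2.mem_mk_right _ _)⟩)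
    · exact Or.inl (Or.inr ⟨hv _ (h ▸ Sym2.mem_mk_left _ _), hv _ (h ▸ Sym2.mem_mk_right _ _)⟩)
    · exact Or.inr ⟨hv _ (h ▸ Sym2.mem_mk_left _ _), hv _ (h ▸ Sym2.mem_mk_right _ _)⟩
  apply (Finset.card_le_card hsub).trans
  apply (Finset.card_biUnion_le).trans
  have hNBcard : ∀ a ∈ S3 n, ({a} ×ˢ NB a).card ≤ 27 * n := by
    intro a _
    rw [Finset.card_product, Finset.card_singleton, one_mul]
    have h1 : ((vset a ×ˢ (vset a ×ˢ univ)) : Finset (Fin n × Fin n × Fin n)).card ≤ 9 * n := by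
      rw [Finset.card_product, Finset.card_product, card_univ, Fintype.card_fin]
      calc (vset a).card * ((vset a).card * n) ≤ 3 * (3 * n) :=
            Nat.mul_le_mul (card_vset_le a) (Nat.mul_le_mul (card_vset_le a) le_rfl)
        _ = 9 * n := by ring
    have h2 : ((vset a ×ˢ (univ ×ˢ vset a)) : Finset (Fin n × Fin n × Fin n)).card ≤ 9 * n := by
      rw [Finset.card_product, Finset.card_product, card_univ, Fintype.card_fin]
      calc (vset a).card * (n * (vset a).card) ≤ 3 * (n * 3) :=
            Nat.mul_le_mul (card_vset_le a) (Nat.mul_le_mul le_rfl (card_vset_le a))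
        _ = 9 * n := by ring
    have h3 : ((univ ×ˢ (vset a ×ˢ vset a)) : Finset (Fin n × Fin n × Fin n)).card ≤ 9 * n := by
      rw [Finset.card_product, Finset.card_product, card_univ, Fintype.card_fin]
      calc n * ((vset a).card * (vset a).card) ≤ n * (3 * 3) :=
            Nat.mul_le_mul le_rfl (Nat.mul_le_mul (card_vset_le a) (card_vset_le a))
        _ = 9 * n := by ring
    have := Finset.card_union_le
      (((vset a ×ˢ (vset a ×ˢ univ)) : Finset (Fin n × Fin n × Fin n))
        ∪ ((vset a ×ˢ (univ ×ˢ vset a)) : Finset (Fin n × Fin n × Fin n)))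
      ((univ ×ˢ (vset a ×ˢ vset a)) : Finset (Fin n × Fin n × Fin n))
    have := Finset.card_union_le ((vset a ×ˢ (vset a ×ˢ univ)) : Finset (Fin n × Fin n × Fin n))
      ((vset a ×ˢ (univ ×ˢ vset a)) : Finset (Fin n × Fin n × Fin n))
    simp only [hNB]
    omega
  apply (Finset.sum_le_sum hNBcard).trans
  rw [Finset.sum_const, smul_eq_mul]
  have := card_S3_le (n := n)
  calc (S3 n).card * (27 * n) ≤ n ^ 3 * (27 * n) := Nat.mul_le_mul_right _ this
    _ = 27 * n ^ 4 := by ring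

lemma var_le {p : ℝ} (hp0 : 0 ≤ p) (hp1 : p ≤ 1) :
    ∑ q ∈ S3 n ×ˢ S3 n, (p ^ (edg q.1 ∪ edg q.2).card - p ^ 6)
      ≤ (n : ℝ) ^ 3 * p ^ 3 + 27 * (n : ℝ) ^ 4 * p ^ 5 := by
  set f : (Fin n × Fin n × Fin n) × (Fin n × Fin n × Fin n) → ℝ :=
    fun q => p ^ (edg q.1 ∪ edg q.2).card - p ^ 6 with hf
  rw [← Finset.sum_filter_add_sum_filter_not (S3 n ×ˢ S3 n) (fun q => q.1 = q.2) f]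
  rw [← Finset.sum_filter_add_sum_filter_not
    ((S3 n ×ˢ S3 n).filter (fun q => ¬ q.1 = q.2)) (fun q => Disjoint (edg q.1) (edg q.2)) f]
  have B1 : ∑ q ∈ (S3 n ×ˢ S3 n).filter (fun q => q.1 = q.2), f q ≤ (n : ℝ) ^ 3 * p ^ 3 := by
    have hb : ∀ q ∈ (S3 n ×ˢ S3 n).filter (fun q => q.1 = q.2), f q ≤ p ^ 3 := by
      intro q hq
      rw [mem_filter, Finset.mem_product] at hq
      rw [hf]
      simp only
      rw [← hq.2, Finset.union_self, card_edg hq.1.1]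
      have : (0:ℝ) ≤ p ^ 6 := pow_nonneg hp0 _
      linarith
    apply (Finset.sum_le_card_nsmul _ _ _ hb).trans
    rw [nsmul_eq_mul]
    have hcard : ((S3 n ×ˢ S3 n).filter (fun q => q.1 = q.2)).card ≤ n ^ 3 := by
      apply le_trans _ (card_S3_le (n := n))
      apply Finset.card_le_card_of_injOn (fun q => q.1)
      · intro q hq
        rw [mem_coe, mem_filter, Finset.mem_product] at hq
        exact hq.1.1
      · intro q hq r hr hqr
        rw [mem_coe, mem_filter, Finset.mem_product] at hq hr
        have hqr' : q.1 = r.1 := hqr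
        exact Prod.ext hqr' (by rw [← hq.2, ← hr.2, hqr'])
    have : (((S3 n ×ˢ S3 n).filter (fun q => q.1 = q.2)).card : ℝ) ≤ (n : ℝ) ^ 3 := by
      exact_mod_cast Nat.cast_le.mpr (hcard.trans_eq rfl) |>.trans_eq (by push_cast; ring)
    exact mul_le_mul_of_nonneg_right this (pow_nonneg hp0 _)
  have B2 : ∑ q ∈ ((S3 n ×ˢ S3 n).filter (fun q => ¬ q.1 = q.2)).filter
      (fun q => Disjoint (edg q.1) (edg q.2)), f q = 0 := by
    apply Finset.sum_eq_zero
    intro q hq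
    rw [mem_filter, mem_filter, Finset.mem_product] at hq
    rw [hf]
    simp only
    rw [card_union_eq6 hq.1.1.1 hq.1.1.2 hq.2, sub_self]
  have B3 : ∑ q ∈ ((S3 n ×ˢ S3 n).filter (fun q => ¬ q.1 = q.2)).filter
      (fun q => ¬ Disjoint (edg q.1) (edg q.2)), f q ≤ 27 * (n : ℝ) ^ 4 * p ^ 5 := by
    have hb : ∀ q ∈ ((S3 n ×ˢ S3 n).filter (fun q => ¬ q.1 = q.2)).filter
        (fun q => ¬ Disjoint (edg q.1) (edg q.2)), f q ≤ p ^ 5 := by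
      intro q hq
      rw [mem_filter, mem_filter, Finset.mem_product] at hq
      rw [hf]
      simp only
      have h5 : 5 ≤ (edg q.1 ∪ edg q.2).card := card_union_ge5 hq.1.1.1 hq.1.1.2 hq.1.2
      have : p ^ (edg q.1 ∪ edg q.2).card ≤ p ^ 5 := pow_le_pow_of_le_one hp0 hp1 h5
      have : (0:ℝ) ≤ p ^ 6 := pow_nonneg hp0 _
      linarith [pow_le_pow_of_le_one hp0 hp1 h5]
    apply (Finset.sum_le_card_nsmul _ _ _ hb).trans
    rw [nsmul_eq_mul]
    have hcard := card_bad_le (n := n)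
    have : ((((S3 n ×ˢ S3 n).filter (fun q => ¬ q.1 = q.2)).filter
        (fun q => ¬ Disjoint (edg q.1) (edg q.2))).card : ℝ) ≤ 27 * (n : ℝ) ^ 4 := by
      exact_mod_cast hcard
    calc _ ≤ (27 * (n:ℝ)^4) * p ^ 5 := mul_le_mul_of_nonneg_right this (pow_nonneg hp0 _)
      _ = 27 * (n : ℝ) ^ 4 * p ^ 5 := by ring
  linarith

def A (n : ℕ) : SimpleGraph (Fin n) → Prop := fun G =>
  ∃ v : Fin n, ∀ x ∈ G.neighborSet v, ∀ y ∈ G.neighborSet v, ¬ G.Adj x y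

lemma triangle_of_adj {G : SimpleGraph (Fin n)} {v x y : Fin n}
    (hvx : G.Adj v x) (hvy : G.Adj v y) (hxy : G.Adj x y) :
    ∃ t ∈ S3 n, edg t ⊆ G.edgeFinset ∧ v ∈ vset t := by
  obtain ⟨t, ht, hv⟩ := sort3 hvx.ne hvy.ne hxy.ne
  have hadj : ∀ z w : Fin n, z ∈ ({v, x, y} : Finset (Fin n)) →
      w ∈ ({v, x, y} : Finset (Fin n)) → z ≠ w → G.Adj z w := by
    intro z w hz hw hzw
    simp only [mem_insert, mem_singleton] at hz hw
    rcases hz with rfl | rfl | rfl <;> rcases hw with rfl | rfl | rfl <;>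
      first
      | exact absurd rfl hzw
      | assumption
      | exact hvx.symm
      | exact hvy.symm
      | exact hxy.symm
  have hc1 : t.1 ∈ ({v, x, y} : Finset (Fin n)) := by
    rw [← hv]; exact mem_vset.mpr (Or.inl rfl)
  have hc2 : t.2.1 ∈ ({v, x, y} : Finset (Fin n)) := by
    rw [← hv]; exact mem_vset.mpr (Or.inr (Or.inl rfl))
  have hc3 : t.2.2 ∈ ({v, x, y} : Finset (Fin n)) := by
    rw [← hv]; exact mem_vset.mpr (Or.inr (Or.inr rfl))
  have hts := mem_S3.mp ht
  refine ⟨t, ht, ?_, ?_⟩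
  · intro e he
    rw [edg, mem_insert, mem_insert, mem_singleton] at he
    rw [SimpleGraph.mem_edgeFinset]
    rcases he with h | h | h <;> subst h <;> rw [SimpleGraph.mem_edgeSet]
    exacts [hadj _ _ hc1 hc2 hts.1.ne, hadj _ _ hc1 hc3 (hts.1.trans hts.2).ne,
      hadj _ _ hc2 hc3 hts.2.ne]
  · rw [hv]; simp

lemma cover {G : SimpleGraph (Fin n)}
    (h : ∀ v : Fin n, ∃ x ∈ G.neighborSet v, ∃ y ∈ G.neighborSet v, G.Adj x y) :
    n ≤ 3 * TC n G.edgeFinset := by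
  choose x hx y hy hxy using h
  have hT : ∀ v : Fin n, ∃ t ∈ S3 n, edg t ⊆ G.edgeFinset ∧ v ∈ vset t := fun v =>
    triangle_of_adj ((G.mem_neighborSet _ _).mp (hx v)) ((G.mem_neighborSet _ _).mp (hy v))
      (hxy v)
  choose f hf1 hf2 hf3 using hT
  have hmain := Finset.card_le_mul_card_image_of_maps_to
    (f := f) (s := (univ : Finset (Fin n)))
    (t := (S3 n).filter (fun a => edg a ⊆ G.edgeFinset))
    (fun v _ => mem_filter.mpr ⟨hf1 v, hf2 v⟩) 3 ?_
  · rw [card_univ, Fintype.card_fin] at hmain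
    exact hmain
  · intro b hb
    apply le_trans _ (card_vset_le b)
    apply Finset.card_le_card
    intro v hv
    rw [mem_filter] at hv
    rw [← hv.2]
    exact hf3 v

lemma key {p : ℝ} (hn : 1 ≤ n) (hp0 : 0 ≤ p) (hp1 : p ≤ 1)
    (hmu : ((S3 n).card : ℝ) * p ^ 3 ≤ (n : ℝ) / 6) :
    1 - graphProb n p (A n)
      ≤ 36 / (n : ℝ) ^ 2 * ((n : ℝ) ^ 3 * p ^ 3 + 27 * (n : ℝ) ^ 4 * p ^ 5) := by
  have hx0 : (0 : ℝ) < n := by exact_mod_cast hn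
  set μ : ℝ := ((S3 n).card : ℝ) * p ^ 3 with hμ
  have h1 : graphProb n p (A n)
      = ∑ t ∈ (M n).powerset, (if A n (Gof t) then wt n p t else 0) := graphProb_eq p (A n)
  have hsplit : (∑ t ∈ (M n).powerset, (if A n (Gof t) then wt n p t else 0))
      + (∑ t ∈ (M n).powerset, (if ¬ A n (Gof t) then wt n p t else 0)) = 1 := by
    rw [← Finset.sum_add_distrib, ← sum_powerset_wt (n := n) p]
    apply Finset.sum_congr rfl
    intro t _
    by_cases h : A n (Gof t) <;> simp [h]
  have hQ : 1 - graphProb n p (A n)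
      = ∑ t ∈ (M n).powerset, (if ¬ A n (Gof t) then wt n p t else 0) := by
    rw [h1]; linarith
  have hterm : ∀ t ∈ (M n).powerset, (if ¬ A n (Gof t) then wt n p t else 0)
      ≤ 36 / (n : ℝ) ^ 2 * (wt n p t * ((TC n t : ℝ) - μ) ^ 2) := by
    intro t ht
    have hwt := wt_nonneg hp0 hp1 t
    by_cases h : A n (Gof t)
    · rw [if_neg (not_not_intro h)]
      positivity
    · rw [if_pos h]
      have hcov : n ≤ 3 * TC n t := by
        rw [A] at h
        push_neg at h
        have := cover h
        rwa [edgeFinset_Gof ht] at this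
      have hTC : (n : ℝ) / 3 ≤ (TC n t : ℝ) := by
        have : (n : ℝ) ≤ 3 * (TC n t : ℝ) := by exact_mod_cast hcov
        linarith
      have hdiff : (n : ℝ) / 6 ≤ (TC n t : ℝ) - μ := by
        rw [hμ]; linarith
      have hdiff0 : (0 : ℝ) ≤ (TC n t : ℝ) - μ := le_trans (by positivity) hdiff
      have hsq : ((n : ℝ) / 6) ^ 2 ≤ ((TC n t : ℝ) - μ) ^ 2 :=
        pow_le_pow_left₀ (by positivity) hdiff 2
      have h36 : (1 : ℝ) ≤ 36 / (n : ℝ) ^ 2 * ((TC n t : ℝ) - μ) ^ 2 := by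
        rw [div_mul_eq_mul_div, le_div_iff₀ (by positivity)]
        nlinarith
      calc wt n p t = wt n p t * 1 := (mul_one _).symm
        _ ≤ wt n p t * (36 / (n : ℝ) ^ 2 * ((TC n t : ℝ) - μ) ^ 2) :=
            mul_le_mul_of_nonneg_left h36 hwt
        _ = 36 / (n : ℝ) ^ 2 * (wt n p t * ((TC n t : ℝ) - μ) ^ 2) := by ring
  have hvar : ∑ t ∈ (M n).powerset, wt n p t * ((TC n t : ℝ) - μ) ^ 2
      = (∑ q ∈ S3 n ×ˢ S3 n, p ^ (edg q.1 ∪ edg q.2).card) - μ ^ 2 := by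
    have expand : ∀ t ∈ (M n).powerset, wt n p t * ((TC n t : ℝ) - μ) ^ 2
        = wt n p t * (TC n t : ℝ) ^ 2 - (2 * μ) * (wt n p t * (TC n t : ℝ))
          + μ ^ 2 * wt n p t := fun t _ => by ring
    rw [Finset.sum_congr rfl expand, Finset.sum_add_distrib, Finset.sum_sub_distrib,
      ← Finset.mul_sum, ← Finset.mul_sum, ET p, ET2 p, sum_powerset_wt p, hμ]
    ring
  have hmu2 : μ ^ 2 = ∑ q ∈ S3 n ×ˢ S3 n, (p ^ 6 : ℝ) := by
    rw [Finset.sum_const, Finset.card_product, nsmul_eq_mul, hμ]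
    push_cast
    ring
  have hdiff2 : (∑ q ∈ S3 n ×ˢ S3 n, p ^ (edg q.1 ∪ edg q.2).card) - μ ^ 2
      = ∑ q ∈ S3 n ×ˢ S3 n, (p ^ (edg q.1 ∪ edg q.2).card - p ^ 6) := by
    rw [hmu2, ← Finset.sum_sub_distrib]
  calc 1 - graphProb n p (A n)
      = ∑ t ∈ (M n).powerset, (if ¬ A n (Gof t) then wt n p t else 0) := hQ
    _ ≤ ∑ t ∈ (M n).powerset, 36 / (n : ℝ) ^ 2 * (wt n p t * ((TC n t : ℝ) - μ) ^ 2) :=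
        Finset.sum_le_sum hterm
    _ = 36 / (n : ℝ) ^ 2 * ∑ t ∈ (M n).powerset, wt n p t * ((TC n t : ℝ) - μ) ^ 2 := by
        rw [Finset.mul_sum]
    _ = 36 / (n : ℝ) ^ 2 * ∑ q ∈ S3 n ×ˢ S3 n, (p ^ (edg q.1 ∪ edg q.2).card - p ^ 6) := by
        rw [hvar, hdiff2]
    _ ≤ 36 / (n : ℝ) ^ 2 * ((n : ℝ) ^ 3 * p ^ 3 + 27 * (n : ℝ) ^ 4 * p ^ 5) := by
        apply mul_le_mul_of_nonneg_left (var_le hp0 hp1) (by positivity)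

lemma gp_le_one {p : ℝ} (hp0 : 0 ≤ p) (hp1 : p ≤ 1) :
    graphProb n p (A n) ≤ 1 := by
  rw [graphProb_eq p (A n), ← sum_powerset_wt (n := n) p]
  apply Finset.sum_le_sum
  intro t _
  by_cases h : A n (Gof t) <;> simp [h, wt_nonneg hp0 hp1 t]

end AASProof

open AASProof

/-- For `2/3 ≤ α < 1` and `p = n^{-α}`, a.a.s. some vertex of `G(n,p)` has
an independent neighborhood. -/
theorem aas_exists_independent_neighborhood (α : ℝ) (h0 : 2 / 3 ≤ α) (h1 : α < 1) :
    Tendsto (fun n : ℕ => graphProb n ((n : ℝ) ^ (-α)) (fun G =>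
        ∃ v : Fin n, ∀ x ∈ G.neighborSet v, ∀ y ∈ G.neighborSet v, ¬ G.Adj x y))
      atTop (nhds 1) := by
  have hshow : (fun n : ℕ => graphProb n ((n : ℝ) ^ (-α)) (fun G =>
      ∃ v : Fin n, ∀ x ∈ G.neighborSet v, ∀ y ∈ G.neighborSet v, ¬ G.Adj x y))
      = fun n : ℕ => graphProb n ((n : ℝ) ^ (-α)) (A n) := rfl
  rw [hshow]
  have hg : Tendsto (fun n : ℕ => 1 - 1008 / (n : ℝ)) atTop (nhds 1) := by
    have := tendsto_const_div_atTop_nhds_zero_nat (1008 : ℝ)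
    have h2 := this.const_sub (1 : ℝ)
    simpa using h2
  apply tendsto_of_tendsto_of_tendsto_of_le_of_le' hg tendsto_const_nhds
  · -- lower bound eventually
    filter_upwards [eventually_ge_atTop 1] with n hn
    have hx1 : (1 : ℝ) ≤ (n : ℝ) := by exact_mod_cast hn
    have hx0 : (0 : ℝ) < (n : ℝ) := by linarith
    set p : ℝ := (n : ℝ) ^ (-α) with hp
    have hp0 : 0 ≤ p := Real.rpow_nonneg (le_of_lt hx0) _
    have hp1 : p ≤ 1 := Real.rpow_le_one_of_one_le_of_nonpos hx1 (by linarith)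
    have hp3 : p ^ 3 = (n : ℝ) ^ ((-α) * 3) := by
      rw [hp, Real.rpow_mul (le_of_lt hx0), ← Real.rpow_natCast ((n:ℝ) ^ (-α)) 3]
      norm_num
    have hp5 : p ^ 5 = (n : ℝ) ^ ((-α) * 5) := by
      rw [hp, Real.rpow_mul (le_of_lt hx0), ← Real.rpow_natCast ((n:ℝ) ^ (-α)) 5]
      norm_num
    have hn3p3 : (n : ℝ) ^ 3 * p ^ 3 ≤ (n : ℝ) := by
      rw [hp3, ← Real.rpow_natCast (n : ℝ) 3, ← Real.rpow_add hx0]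
      calc (n:ℝ) ^ ((3:ℕ) + (-α) * 3) ≤ (n:ℝ) ^ (1:ℝ) :=
            Real.rpow_le_rpow_of_exponent_le hx1 (by push_cast; linarith)
        _ = (n:ℝ) := Real.rpow_one _
    have hn4p5 : (n : ℝ) ^ 4 * p ^ 5 ≤ (n : ℝ) := by
      rw [hp5, ← Real.rpow_natCast (n : ℝ) 4, ← Real.rpow_add hx0]
      calc (n:ℝ) ^ ((4:ℕ) + (-α) * 5) ≤ (n:ℝ) ^ (1:ℝ) :=
            Real.rpow_le_rpow_of_exponent_le hx1 (by push_cast; linarith)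
        _ = (n:ℝ) := Real.rpow_one _
    have hmu : ((S3 n).card : ℝ) * p ^ 3 ≤ (n : ℝ) / 6 := by
      have hc : ((S3 n).card : ℝ) ≤ (n : ℝ) ^ 3 / 6 := by
        have := six_mul_choose3_le (n := n)
        rw [card_S3]
        have h6 : (6 : ℝ) * ((n.choose 3 : ℕ) : ℝ) ≤ ((n : ℝ)) ^ 3 := by
          exact_mod_cast this
        linarith
      have hpm : p ^ 3 ≤ (n : ℝ) ^ (-(2:ℝ)) := by
        rw [hp3]
        exact Real.rpow_le_rpow_of_exponent_le hx1 (by linarith)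
      have hnn : (0:ℝ) ≤ ((S3 n).card : ℝ) := Nat.cast_nonneg _
      have hmul : ((S3 n).card : ℝ) * p ^ 3 ≤ ((n : ℝ) ^ 3 / 6) * (n : ℝ) ^ (-(2:ℝ)) := by
        apply mul_le_mul hc hpm (by positivity) (by positivity)
      apply hmul.trans
      rw [← Real.rpow_natCast (n : ℝ) 3, div_mul_eq_mul_div, ← Real.rpow_add hx0]
      apply le_of_eq
      rw [show ((3:ℕ):ℝ) + -(2:ℝ) = 1 by norm_num, Real.rpow_one]
    have hkey := key hn hp0 hp1 hmu
    have hb : 36 / (n : ℝ) ^ 2 * ((n : ℝ) ^ 3 * p ^ 3 + 27 * (n : ℝ) ^ 4 * p ^ 5)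
        ≤ 1008 / (n : ℝ) := by
      have hs : (n : ℝ) ^ 3 * p ^ 3 + 27 * ((n : ℝ) ^ 4 * p ^ 5) ≤ 28 * (n : ℝ) := by
        nlinarith
      calc 36 / (n : ℝ) ^ 2 * ((n : ℝ) ^ 3 * p ^ 3 + 27 * (n : ℝ) ^ 4 * p ^ 5)
          ≤ 36 / (n : ℝ) ^ 2 * (28 * (n : ℝ)) := by
            apply mul_le_mul_of_nonneg_left _ (by positivity)
            linarith
        _ = 1008 / (n : ℝ) := by field_simp; ring
    linarith
  · filter_upwards with n
    by_cases hn : n = 0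
    · subst hn
      have : ((0 : ℕ) : ℝ) ^ (-α) = 0 := by
        rw [Nat.cast_zero, Real.zero_rpow (by linarith)]
      rw [this]
      exact gp_le_one le_rfl zero_le_one
    · have hx1 : (1 : ℝ) ≤ (n : ℝ) := by
        have : 1 ≤ n := Nat.one_le_iff_ne_zero.mpr hn
        exact_mod_cast this
      exact gp_le_one (Real.rpow_nonneg (by linarith) _)
        (Real.rpow_le_one_of_one_le_of_nonpos hx1 (by linarith))
end
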